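/- arXiv:1504.01283 — 2 statements merged into one kernel-verified Lean document; each statement's English description precedes it below -/
import Mathlib

section
/- For every signed permutation w ∈ B_n, sDes(w) = sDes(Q^B(w)), where (P^B(w), Q^B(w)) is the pair of standard Young bitableaux associated to w by the type B Robinson–Schensted correspondence, and also P^B(w⁻¹) = Q^B(w). -/
open Finset

/-- An element of the hyperoctahedral group `B_n` is modeled as a permutation `w` of
`Fin n × Bool` (the pair `(i, b)` representing the letter `i+1`, barred iff `b = true`)
commuting with the bar involution. -/
def IsSignedPerm {n : ℕ} (w : Equiv.Perm (Fin n × Bool)) : Prop :=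
  ∀ p : Fin n × Bool, w (p.1, !p.2) = ((w p).1, !(w p).2)

/-- The letter `w(p+1)` of the signed permutation `w`, written in one-line notation, as a
pair (absolute value minus 1, barred?); junk value for `p ≥ n`. -/
def oneLine {n : ℕ} (w : Equiv.Perm (Fin n × Bool)) (p : ℕ) : ℕ × Bool :=
  if h : p < n then (((w (⟨p, h⟩, false)).1 : ℕ), (w (⟨p, h⟩, false)).2) else (0, false)

/-- The rank of a letter in the total order `1̄ <_r ⋯ <_r n̄ <_r 1 <_r ⋯ <_r n`. -/
def rOrd (n : ℕ) (v : ℕ × Bool) : ℕ :=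
  if v.2 then v.1 else n + v.1

/-- The signed (colored) descent set `sDes(w)` of a signed permutation, encoded as a word
`ℕ → Option Bool`: position `p` (0-based, representing `s = p+1`) carries `some b` iff
`s ∈ S`, where `S` consists of `n` together with all `s ∈ [n−1]` such that either
`w(s) >_r w(s+1)` or `w(s)` is barred and `w(s+1)` is unbarred, and `b = true` iff
`w(s)` is barred. -/
def sDesPerm {n : ℕ} (w : Equiv.Perm (Fin n × Bool)) : ℕ → Option Bool := fun p =>
  if p + 1 = n then some (oneLine w p).2
  else if p + 1 < n ∧ (rOrd n (oneLine w (p + 1)) < rOrd n (oneLine w p) ∨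
      ((oneLine w p).2 = true ∧ (oneLine w (p + 1)).2 = false))
    then some (oneLine w p).2 else none


/-- Schensted row insertion: insert `x` into a row, returning the new row and the
bumped entry (if any). -/
def insertRow : List ℕ → ℕ → List ℕ × Option ℕ
  | [], x => ([x], none)
  | y :: t, x =>
      if x < y then (x :: t, some y)
      else
        let r := insertRow t x
        (y :: r.1, r.2)

/-- Schensted insertion of `x` into a tableau (a list of rows). -/
def insertTableau : List (List ℕ) → ℕ → List (List ℕ)
  | [], x => [[x]]
  | r :: rs, x =>
      match insertRow r x with
      | (r', none) => r' :: rs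
      | (r', some y) => r' :: insertTableau rs y

/-- Place the entry `k` at the end of row `i` of a tableau (creating a new row if
needed). -/
def placeEntry : List (List ℕ) → ℕ → ℕ → List (List ℕ)
  | [], _, k => [[k]]
  | r :: t, 0, k => (r ++ [k]) :: t
  | r :: t, i + 1, k => r :: placeEntry t i k

/-- The index of the first row in which two tableaux differ in length (the row where a
new cell was created by an insertion). -/
def newCellRow : List (List ℕ) → List (List ℕ) → ℕ
  | _, [] => 0
  | [], _ :: _ => 0
  | r :: t, r' :: t' => if r.length = r'.length then newCellRow t t' + 1 else 0

/-- The Robinson–Schensted correspondence applied to a two-line array, given as a list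
of pairs (top entry, bottom entry): the bottom entries are Schensted-inserted into the
insertion tableau `P` while the top entries record the growth in the recording
tableau `Q`.  Returns `(P, Q)`. -/
def robinsonSchensted (l : List (ℕ × ℕ)) : List (List ℕ) × List (List ℕ) :=
  l.foldl
    (fun pq pv =>
      let p' := insertTableau pq.1 pv.2
      (p', placeEntry pq.2 (newCellRow pq.1 p') pv.1))
    ([], [])


/-- The (0-based) index of the row of the tableau `q` containing the entry `v`. -/
def rowOfEntry (q : List (List ℕ)) (v : ℕ) : ℕ :=
  q.findIdx fun r => r.contains v

/-- The two-line array of positions and absolute values of the letters of `w` of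
bar-status `barred`, in increasing order of position. -/
def twoLine {n : ℕ} (w : Equiv.Perm (Fin n × Bool)) (barred : Bool) : List (ℕ × ℕ) :=
  ((List.range n).filter fun p => (oneLine w p).2 = barred).map
    fun p => (p + 1, (oneLine w p).1 + 1)

/-- The type B Robinson–Schensted insertion bitableau
`P^B(w) = (P⁺, P⁻)` of a signed permutation `w`. -/
def PB {n : ℕ} (w : Equiv.Perm (Fin n × Bool)) : (List (List ℕ)) × (List (List ℕ)) :=
  ((robinsonSchensted (twoLine w false)).1, (robinsonSchensted (twoLine w true)).1)

/-- The type B Robinson–Schensted recording bitableau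
`Q^B(w) = (Q⁺, Q⁻)` of a signed permutation `w`. -/
def QB {n : ℕ} (w : Equiv.Perm (Fin n × Bool)) : (List (List ℕ)) × (List (List ℕ)) :=
  ((robinsonSchensted (twoLine w false)).2, (robinsonSchensted (twoLine w true)).2)

/-- The signed descent set of a standard Young bitableau `(q⁺, q⁻)` of size `n`, encoded
as a word `ℕ → Option Bool`: `S` consists of `n` together with all `s ∈ [n−1]` such
that either `s, s+1` lie in the same tableau with `s+1` in a strictly lower row, or they
lie in different tableaux; the sign of `s` is `−` (`true`) iff `s` lies in `q⁻`. -/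
def sDesBitab (qp qm : List (List ℕ)) (n : ℕ) : ℕ → Option Bool := fun p =>
  let inM : ℕ → Bool := fun v => qm.any fun r => r.contains v
  let row : ℕ → ℕ := fun v => if inM v then rowOfEntry qm v else rowOfEntry qp v
  if p + 1 = n then some (inM (p + 1))
  else if p + 1 < n ∧ ((inM (p + 1) = inM (p + 2) ∧ row (p + 1) < row (p + 2)) ∨
      inM (p + 1) ≠ inM (p + 2))
    then some (inM (p + 1)) else none


/-! ### Auxiliary development -/

namespace RSAux

open List

abbrev Tab := List (List ℕ)

/-- Insertion returning also the row index of the new cell. -/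
def insertT : Tab → ℕ → Tab × ℕ
  | [], x => ([[x]], 0)
  | R :: T, x =>
    match insertRow R x with
    | (R', none) => (R' :: T, 0)
    | (R', some z) => ((R' :: (insertT T z).1), (insertT T z).2 + 1)

theorem insertRow_nil (x : ℕ) : insertRow [] x = ([x], none) := rfl

theorem insertRow_cons (y : ℕ) (t : List ℕ) (x : ℕ) :
    insertRow (y :: t) x =
      if x < y then (x :: t, some y) else (y :: (insertRow t x).1, (insertRow t x).2) := by
  by_cases h : x < y <;> simp [insertRow, h]

theorem insertT_nil (x : ℕ) : insertT [] x = ([[x]], 0) := rfl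

theorem insertT_cons_none {R : List ℕ} {x : ℕ} (h : (insertRow R x).2 = none) (T : Tab) :
    insertT (R :: T) x = ((insertRow R x).1 :: T, 0) := by
  simp only [insertT]
  rcases h' : insertRow R x with ⟨R', o⟩
  rw [h'] at h; cases o with
  | none => simp [h']
  | some z => simp at h

theorem insertT_cons_some {R : List ℕ} {x z : ℕ} (h : (insertRow R x).2 = some z) (T : Tab) :
    insertT (R :: T) x = ((insertRow R x).1 :: (insertT T z).1, (insertT T z).2 + 1) := by
  simp only [insertT]
  rcases h' : insertRow R x with ⟨R', o⟩
  rw [h'] at h; cases o with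
  | none => simp at h
  | some z' => simp at h; subst h; simp [h']

theorem insertRow_none {R : List ℕ} {x : ℕ} (h : (insertRow R x).2 = none) :
    (insertRow R x).1 = R ++ [x] := by
  induction R with
  | nil => simp [insertRow_nil]
  | cons y t ih =>
    by_cases hxy : x < y
    · simp [insertRow_cons, hxy] at h
    · simp only [insertRow_cons, if_neg hxy] at h ⊢
      simp [ih h]

theorem insertRow_none_le {R : List ℕ} {x : ℕ} (h : (insertRow R x).2 = none) :
    ∀ y ∈ R, y ≤ x := by
  induction R with
  | nil => simp
  | cons y t ih =>
    by_cases hxy : x < y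
    · simp [insertRow_cons, hxy] at h
    · simp only [insertRow_cons, if_neg hxy] at h
      intro a ha
      rcases List.mem_cons.1 ha with rfl | ha
      · omega
      · exact ih h a ha

theorem insertRow_big {R : List ℕ} {x : ℕ} (h : ∀ y ∈ R, ¬ x < y) :
    insertRow R x = (R ++ [x], none) := by
  induction R with
  | nil => simp [insertRow_nil]
  | cons y t ih =>
    rw [insertRow_cons, if_neg (h y (by simp))]
    rw [ih (fun a ha => h a (by simp [ha]))]
    simp

theorem insertRow_some_length {R : List ℕ} {x z : ℕ} (h : (insertRow R x).2 = some z) :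
    (insertRow R x).1.length = R.length := by
  induction R with
  | nil => simp [insertRow_nil] at h
  | cons y t ih =>
    by_cases hxy : x < y
    · simp [insertRow_cons, hxy]
    · simp only [insertRow_cons, if_neg hxy] at h ⊢
      simp [ih h]

theorem insertRow_some_mem {R : List ℕ} {x z : ℕ} (h : (insertRow R x).2 = some z) :
    z ∈ R := by
  induction R with
  | nil => simp [insertRow_nil] at h
  | cons y t ih =>
    by_cases hxy : x < y
    · simp [insertRow_cons, hxy] at h; simp [h]
    · simp only [insertRow_cons, if_neg hxy] at h
      exact List.mem_cons_of_mem _ (ih h)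

theorem insertRow_some_gt {R : List ℕ} {x z : ℕ} (h : (insertRow R x).2 = some z) :
    x < z := by
  induction R with
  | nil => simp [insertRow_nil] at h
  | cons y t ih =>
    by_cases hxy : x < y
    · simp [insertRow_cons, hxy] at h; omega
    · simp only [insertRow_cons, if_neg hxy] at h
      exact ih h

theorem insertRow_mem {R : List ℕ} {x a : ℕ} (h : a ∈ (insertRow R x).1) :
    a ∈ R ∨ a = x := by
  induction R with
  | nil => simp [insertRow_nil] at h; simp [h]
  | cons y t ih =>
    by_cases hxy : x < y
    · simp [insertRow_cons, hxy] at h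
      rcases h with rfl | h
      · right; rfl
      · left; simp [h]
    · simp only [insertRow_cons, if_neg hxy] at h
      rcases List.mem_cons.1 h with rfl | h
      · left; simp
      · rcases ih h with h | h
        · left; simp [h]
        · right; exact h

theorem insertRow_perm (R : List ℕ) (x : ℕ) :
    (insertRow R x).1 ++ (insertRow R x).2.toList ~ x :: R := by
  induction R with
  | nil => simp [insertRow_nil]
  | cons y t ih =>
    by_cases hxy : x < y
    · simp only [insertRow_cons, if_pos hxy, Option.toList_some, List.cons_append]
      exact (List.perm_append_singleton y t).cons x
    · simp only [insertRow_cons, if_neg hxy, List.cons_append]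
      refine ((ih.cons y).trans ?_)
      exact List.Perm.swap _ _ _

theorem insertRow_sorted {R : List ℕ} {x : ℕ} (hs : R.Pairwise (· < ·)) (hx : x ∉ R) :
    (insertRow R x).1.Pairwise (· < ·) := by
  induction R with
  | nil => simp [insertRow_nil]
  | cons y t ih =>
    rcases List.pairwise_cons.1 hs with ⟨hy, ht⟩
    by_cases hxy : x < y
    · simp only [insertRow_cons, if_pos hxy]
      exact List.pairwise_cons.2 ⟨fun a ha => lt_trans hxy (hy a ha), ht⟩
    · simp only [insertRow_cons, if_neg hxy]
      refine List.pairwise_cons.2 ⟨?_, ih ht (fun h => hx (List.mem_cons_of_mem _ h))⟩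
      intro a ha
      rcases insertRow_mem ha with h | rfl
      · exact hy a h
      · have : y ≠ a := fun h => hx (by simp [h])
        omega

theorem insertRow_gt_bump : ∀ {R : List ℕ} {x₁ x₂ z₁ z₂ : ℕ},
    R.Pairwise (· < ·) → x₁ < x₂ → (insertRow R x₁).2 = some z₁ →
    (insertRow (insertRow R x₁).1 x₂).2 = some z₂ → z₁ < z₂ := by
  intro R
  induction R with
  | nil => intro _ _ _ _ _ _ h1 _; simp [insertRow_nil] at h1
  | cons y t ih =>
    intro x₁ x₂ z₁ z₂ hs h12 h1 h2
    rcases List.pairwise_cons.1 hs with ⟨hy, ht⟩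
    by_cases hxy : x₁ < y
    · simp only [insertRow_cons, if_pos hxy] at h1 h2
      have hz1 : z₁ = y := by simpa using h1.symm
      subst hz1
      rw [if_neg (by omega)] at h2
      simp only at h2
      exact hy _ (insertRow_some_mem h2)
    · simp only [insertRow_cons, if_neg hxy] at h1 h2
      rw [if_neg (by omega)] at h2
      simp only at h2
      exact ih ht h12 h1 h2

theorem insertRow_lt_bump_none : ∀ {R : List ℕ} {x₁ x₂ : ℕ},
    x₂ < x₁ → (insertRow R x₁).2 = none →
    ∃ z₂, (insertRow (insertRow R x₁).1 x₂).2 = some z₂ := by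
  intro R
  induction R with
  | nil =>
    intro x₁ x₂ h12 h1
    refine ⟨x₁, ?_⟩
    simp [insertRow_nil, insertRow_cons, h12]
  | cons y t ih =>
    intro x₁ x₂ h12 h1
    by_cases hxy : x₁ < y
    · simp [insertRow_cons, hxy] at h1
    · simp only [insertRow_cons, if_neg hxy] at h1 ⊢
      by_cases hxy2 : x₂ < y
      · exact ⟨y, by rw [if_pos hxy2]⟩
      · rcases ih h12 h1 with ⟨z₂, hz₂⟩
        exact ⟨z₂, by rw [if_neg hxy2]; simpa using hz₂⟩

theorem insertRow_lt_bump_some : ∀ {R : List ℕ} {x₁ x₂ z₁ : ℕ},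
    x₂ < x₁ → (insertRow R x₁).2 = some z₁ →
    ∃ z₂, (insertRow (insertRow R x₁).1 x₂).2 = some z₂ ∧ z₂ < z₁ := by
  intro R
  induction R with
  | nil => intro _ _ _ _ h1; simp [insertRow_nil] at h1
  | cons y t ih =>
    intro x₁ x₂ z₁ h12 h1
    by_cases hxy : x₁ < y
    · simp only [insertRow_cons, if_pos hxy] at h1 ⊢
      have hz1 : z₁ = y := by simpa using h1.symm
      subst hz1
      refine ⟨x₁, ?_, hxy⟩
      rw [if_pos h12]
    · simp only [insertRow_cons, if_neg hxy] at h1 ⊢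
      have hz1 : x₁ < z₁ := insertRow_some_gt h1
      by_cases hxy2 : x₂ < y
      · exact ⟨y, by rw [if_pos hxy2], by omega⟩
      · rcases ih h12 h1 with ⟨z₂, hz₂, hlt⟩
        exact ⟨z₂, by rw [if_neg hxy2]; simpa using hz₂, hlt⟩

theorem insertRow_append_none {R : List ℕ} {x m : ℕ} (hx : x < m)
    (h : (insertRow R x).2 = none) :
    insertRow (R ++ [m]) x = (R ++ [x], some m) := by
  induction R with
  | nil => simp [insertRow_nil, insertRow_cons, hx]
  | cons y t ih =>
    by_cases hxy : x < y
    · simp [insertRow_cons, hxy] at h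
    · simp only [insertRow_cons, if_neg hxy] at h
      simp only [List.cons_append, insertRow_cons, if_neg hxy, ih h]

theorem insertRow_append_some {R : List ℕ} {x m z : ℕ} (h : (insertRow R x).2 = some z) :
    insertRow (R ++ [m]) x = ((insertRow R x).1 ++ [m], some z) := by
  induction R with
  | nil => simp [insertRow_nil] at h
  | cons y t ih =>
    by_cases hxy : x < y
    · simp only [insertRow_cons, if_pos hxy] at h ⊢
      have hz : z = y := by simpa using h.symm
      subst hz
      simp [List.cons_append, insertRow_cons, hxy]
    · simp only [insertRow_cons, if_neg hxy] at h ⊢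
      simp only [List.cons_append, insertRow_cons, if_neg hxy, ih h]

theorem placeEntry_nil (i k : ℕ) : placeEntry [] i k = [[k]] := by
  cases i <;> rfl

theorem placeEntry_cons_zero (R : List ℕ) (T : Tab) (k : ℕ) :
    placeEntry (R :: T) 0 k = (R ++ [k]) :: T := rfl

theorem placeEntry_cons_succ (R : List ℕ) (T : Tab) (i k : ℕ) :
    placeEntry (R :: T) (i + 1) k = R :: placeEntry T i k := rfl

theorem insertT_max : ∀ {T : Tab} {m : ℕ}, (∀ R ∈ T, ∀ y ∈ R, y < m) →
    insertT T m = (placeEntry T 0 m, 0) := by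
  intro T
  induction T with
  | nil => intro m _; simp [insertT_nil, placeEntry_nil]
  | cons R T ih =>
    intro m h
    have hb : insertRow R m = (R ++ [m], none) :=
      insertRow_big (fun y hy => by have := h R (by simp) y hy; omega)
    rw [insertT_cons_none (by rw [hb]), hb, placeEntry_cons_zero]

theorem insertT_snd_le : ∀ (T : Tab) (x : ℕ), (insertT T x).2 ≤ T.length := by
  intro T
  induction T with
  | nil => intro x; simp [insertT_nil]
  | cons R T ih =>
    intro x
    rcases h : (insertRow R x).2 with _ | z
    · rw [insertT_cons_none h]; simp
    · rw [insertT_cons_some h]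
      simpa using ih z

theorem insertT_length : ∀ (T : Tab) (x : ℕ),
    (insertT T x).1.length = if (insertT T x).2 = T.length then T.length + 1 else T.length := by
  intro T
  induction T with
  | nil => intro x; simp [insertT_nil]
  | cons R T ih =>
    intro x
    rcases h : (insertRow R x).2 with _ | z
    · rw [insertT_cons_none h]; simp
    · rw [insertT_cons_some h]
      have := ih z
      have h2 := insertT_snd_le T z
      simp only [List.length_cons]
      by_cases hc : (insertT T z).2 = T.length
      · rw [if_pos (by omega)]
        rw [if_pos hc] at this
        simp [this]
      · rw [if_neg (by omega)]
        rw [if_neg hc] at this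
        simp [this]

theorem insertT_length_ge (T : Tab) (x : ℕ) : T.length ≤ (insertT T x).1.length := by
  rw [insertT_length]
  split <;> omega

theorem placeEntry_length : ∀ {Q : Tab} {i : ℕ}, i ≤ Q.length → ∀ (k : ℕ),
    (placeEntry Q i k).length = if i = Q.length then Q.length + 1 else Q.length := by
  intro Q
  induction Q with
  | nil =>
    intro i hi k
    have : i = 0 := by simpa using hi
    subst this; simp [placeEntry_nil]
  | cons R T ih =>
    intro i hi k
    cases i with
    | zero => simp [placeEntry_cons_zero]
    | succ j =>
      rw [placeEntry_cons_succ]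
      simp only [List.length_cons] at hi ⊢
      rw [ih (by omega) k]
      by_cases hc : j = T.length
      · rw [if_pos hc, if_pos (by omega)]
      · rw [if_neg hc, if_neg (by omega)]

theorem insertT_place {m : ℕ} : ∀ (T : Tab) (r x : ℕ), x < m →
    (∀ R ∈ T, ∀ y ∈ R, y < m) → r ≤ T.length →
    insertT (placeEntry T r m) x =
      (placeEntry (insertT T x).1 (if (insertT T x).2 = r then r + 1 else r) m,
        if (insertT T x).2 = r then r + 1 else (insertT T x).2) := by
  intro T
  induction T with
  | nil =>
    intro r x hx _ hr
    have : r = 0 := by simpa using hr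
    subst this
    rw [placeEntry_nil]
    have h1 : insertRow [m] x = ([x], some m) := by
      simp [insertRow_nil, insertRow_cons, hx]
    rw [insertT_cons_some (by rw [h1]), h1]
    simp [insertT_nil, placeEntry_cons_succ, placeEntry_nil]
  | cons R T ih =>
    intro r x hx hT hr
    have hRm : ∀ y ∈ R, y < m := hT R (by simp)
    have hTm : ∀ R' ∈ T, ∀ y ∈ R', y < m := fun R' h => hT R' (by simp [h])
    cases r with
    | zero =>
      rw [placeEntry_cons_zero]
      rcases h : (insertRow R x).2 with _ | z
      · have h2 : insertRow (R ++ [m]) x = (R ++ [x], some m) := insertRow_append_none hx h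
        rw [insertT_cons_some (by rw [h2]), h2]
        rw [insertT_max hTm]
        rw [insertT_cons_none h, insertRow_none h]
        simp [placeEntry_cons_succ]
      · have h2 : insertRow (R ++ [m]) x = ((insertRow R x).1 ++ [m], some z) :=
          insertRow_append_some h
        rw [insertT_cons_some (by rw [h2]), h2]
        rw [insertT_cons_some h]
        simp [placeEntry_cons_zero]
    | succ r' =>
      rw [placeEntry_cons_succ]
      rcases h : (insertRow R x).2 with _ | z
      · rw [insertT_cons_none h, insertT_cons_none h]
        simp [placeEntry_cons_succ]
      · have hz : z < m := hRm z (insertRow_some_mem h)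
        rw [insertT_cons_some h, insertT_cons_some h]
        rw [ih r' z hz hTm (by simpa using hr)]
        simp only
        by_cases hc : (insertT T z).2 = r'
        · simp [hc, placeEntry_cons_succ]
        · simp [hc, placeEntry_cons_succ]

theorem insertT_flatten_perm : ∀ (T : Tab) (x : ℕ),
    ((insertT T x).1).flatten ~ x :: T.flatten := by
  intro T
  induction T with
  | nil => intro x; simp [insertT_nil]
  | cons R T ih =>
    intro x
    rcases h : (insertRow R x).2 with _ | z
    · rw [insertT_cons_none h]
      have := insertRow_perm R x
      rw [h] at this
      simp only [Option.toList_none, List.append_nil] at this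
      simpa [List.flatten_cons] using this.append_right T.flatten
    · rw [insertT_cons_some h]
      have hrow := insertRow_perm R x
      rw [h] at hrow
      simp only [Option.toList_some] at hrow
      simp only [List.flatten_cons]
      calc (insertRow R x).1 ++ ((insertT T z).1).flatten
          ~ (insertRow R x).1 ++ (z :: T.flatten) := List.Perm.append_left _ (ih z)
        _ = ((insertRow R x).1 ++ [z]) ++ T.flatten := by simp
        _ ~ (x :: R) ++ T.flatten := hrow.append_right _
        _ = x :: (R :: T).flatten := by simp

theorem placeEntry_flatten_perm : ∀ (Q : Tab) (i k : ℕ),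
    (placeEntry Q i k).flatten ~ k :: Q.flatten := by
  intro Q
  induction Q with
  | nil => intro i k; simp [placeEntry_nil]
  | cons R T ih =>
    intro i k
    cases i with
    | zero =>
      rw [placeEntry_cons_zero]
      simp only [List.flatten_cons, List.append_assoc]
      exact (List.Perm.append_left R (by simp)).trans List.perm_middle
    | succ j =>
      rw [placeEntry_cons_succ]
      simp only [List.flatten_cons]
      exact ((List.Perm.append_left R (ih j k)).trans List.perm_middle)

/-- The RS step function. -/
def rsStep (pq : Tab × Tab) (pv : ℕ × ℕ) : Tab × Tab :=
  ((insertT pq.1 pv.2).1, placeEntry pq.2 (insertT pq.1 pv.2).2 pv.1)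

theorem insertTableau_eq (T : Tab) (x : ℕ) : insertTableau T x = (insertT T x).1 := by
  induction T generalizing x with
  | nil => simp [insertTableau, insertT_nil]
  | cons R T ih =>
    rcases h : insertRow R x with ⟨R', o⟩
    cases o with
    | none =>
      rw [insertT_cons_none (by rw [h])]
      simp only [insertTableau, h]
    | some z =>
      rw [insertT_cons_some (by rw [h])]
      simp only [insertTableau, h, ih]

theorem newCellRow_insertT : ∀ (T : Tab) (x : ℕ),
    newCellRow T (insertT T x).1 = (insertT T x).2 := by
  intro T
  induction T with
  | nil => intro x; simp [insertT_nil, newCellRow]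
  | cons R T ih =>
    intro x
    rcases h : (insertRow R x).2 with _ | z
    · rw [insertT_cons_none h]
      have : (insertRow R x).1 = R ++ [x] := insertRow_none h
      simp [newCellRow, this]
    · rw [insertT_cons_some h]
      have hl : (insertRow R x).1.length = R.length := insertRow_some_length h
      simp [newCellRow, hl, ih]

theorem robinsonSchensted_eq (l : List (ℕ × ℕ)) :
    robinsonSchensted l = l.foldl rsStep ([], []) := by
  rw [robinsonSchensted]
  suffices h : ∀ pq : Tab × Tab, l.foldl
      (fun pq pv =>
        let p' := insertTableau pq.1 pv.2
        (p', placeEntry pq.2 (newCellRow pq.1 p') pv.1)) pq = l.foldl rsStep pq from h _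
  induction l with
  | nil => intro pq; rfl
  | cons pv l ih =>
    intro pq
    simp only [List.foldl_cons]
    rw [ih]
    congr 1
    simp only [rsStep, insertTableau_eq, newCellRow_insertT]

theorem fold_length : ∀ (l : List (ℕ × ℕ)) (P Q : Tab), P.length = Q.length →
    (l.foldl rsStep (P, Q)).1.length = (l.foldl rsStep (P, Q)).2.length := by
  intro l
  induction l with
  | nil => intro P Q h; exact h
  | cons pv l ih =>
    intro P Q h
    simp only [List.foldl_cons]
    apply ih
    rw [insertT_length, placeEntry_length (by rw [← h]; exact insertT_snd_le P pv.2)]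
    rw [← h]

theorem fold_fst_flatten : ∀ (l : List (ℕ × ℕ)) (P Q : Tab),
    ((l.foldl rsStep (P, Q)).1).flatten ~ (l.map Prod.snd).reverse ++ P.flatten := by
  intro l
  induction l with
  | nil => intro P Q; simp
  | cons pv l ih =>
    intro P Q
    simp only [List.foldl_cons, List.map_cons, List.reverse_cons]
    refine ((ih _ _).trans ?_)
    rw [List.append_assoc]
    exact List.Perm.append_left _ (by simpa using insertT_flatten_perm P pv.2)

theorem fold_snd_flatten : ∀ (l : List (ℕ × ℕ)) (P Q : Tab),
    ((l.foldl rsStep (P, Q)).2).flatten ~ (l.map Prod.fst).reverse ++ Q.flatten := by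
  intro l
  induction l with
  | nil => intro P Q; simp
  | cons pv l ih =>
    intro P Q
    simp only [List.foldl_cons, List.map_cons, List.reverse_cons]
    refine ((ih _ _).trans ?_)
    rw [List.append_assoc]
    exact List.Perm.append_left _ (by simpa using placeEntry_flatten_perm Q (insertT P pv.2).2 pv.1)

theorem insertT_rowsSorted : ∀ (T : Tab) (x : ℕ),
    (∀ R ∈ T, R.Pairwise (· < ·)) → T.flatten.Nodup → x ∉ T.flatten →
    ∀ R ∈ (insertT T x).1, R.Pairwise (· < ·) := by
  intro T
  induction T with
  | nil => intro x _ _ _ R hR; simp [insertT_nil] at hR; simp [hR]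
  | cons R₀ T ih =>
    intro x hs hn hx R hR
    have hxR : x ∉ R₀ := fun h => hx (by simp [List.mem_flatten]; exact Or.inl h)
    have hsR : (insertRow R₀ x).1.Pairwise (· < ·) :=
      insertRow_sorted (hs R₀ (by simp)) hxR
    rcases h : (insertRow R₀ x).2 with _ | z
    · rw [insertT_cons_none h] at hR
      rcases List.mem_cons.1 hR with rfl | hR
      · exact hsR
      · exact hs R (by simp [hR])
    · rw [insertT_cons_some h] at hR
      rcases List.mem_cons.1 hR with rfl | hR
      · exact hsR
      · have hz : z ∈ R₀ := insertRow_some_mem h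
        have hnd : T.flatten.Nodup := by
          simp only [List.flatten_cons, List.nodup_append] at hn
          exact hn.2.1
        have hdisj : z ∉ T.flatten := by
          simp only [List.flatten_cons, List.nodup_append] at hn
          exact fun hzT => hn.2.2 z hz z hzT rfl
        exact ih z (fun R' h' => hs R' (by simp [h'])) hnd hdisj R hR

theorem fold_rowsSorted : ∀ (l : List (ℕ × ℕ)) (P Q : Tab),
    (∀ R ∈ P, R.Pairwise (· < ·)) → (P.flatten ++ l.map Prod.snd).Nodup →
    ∀ R ∈ (l.foldl rsStep (P, Q)).1, R.Pairwise (· < ·) := by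
  intro l
  induction l with
  | nil => intro P Q hs _; exact hs
  | cons pv l ih =>
    intro P Q hs hn
    simp only [List.foldl_cons]
    have hnP : P.flatten.Nodup := (List.nodup_append.1 hn).1
    have hx : pv.2 ∉ P.flatten := by
      intro h
      exact (List.nodup_append.1 hn).2.2 pv.2 h pv.2 (by simp) rfl
    apply ih
    · exact insertT_rowsSorted P pv.2 hs hnP hx
    · have hperm : ((insertT P pv.2).1.flatten ++ l.map Prod.snd) ~
          (P.flatten ++ pv.2 :: l.map Prod.snd) := by
        refine ((insertT_flatten_perm P pv.2).append_right _).trans ?_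
        exact List.perm_middle.symm
      refine hperm.nodup_iff.2 ?_
      simpa using hn

theorem bump_le : ∀ (T : Tab) (x₁ x₂ : ℕ), (∀ R ∈ T, R.Pairwise (· < ·)) → x₁ < x₂ →
    (insertT (insertT T x₁).1 x₂).2 ≤ (insertT T x₁).2 := by
  intro T
  induction T with
  | nil =>
    intro x₁ x₂ _ h12
    rw [insertT_nil]
    have : insertRow [x₁] x₂ = ([x₁] ++ [x₂], none) := insertRow_big (by simp; omega)
    rw [insertT_cons_none (by rw [this])]
  | cons R T ih =>
    intro x₁ x₂ hs h12
    rcases h : (insertRow R x₁).2 with _ | z₁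
    · rw [insertT_cons_none h]
      have h1 : (insertRow R x₁).1 = R ++ [x₁] := insertRow_none h
      have hle : ∀ y ∈ R, y ≤ x₁ := insertRow_none_le h
      have : insertRow (insertRow R x₁).1 x₂ = ((insertRow R x₁).1 ++ [x₂], none) := by
        apply insertRow_big
        intro y hy
        rw [h1] at hy
        rcases List.mem_append.1 hy with hy | hy
        · have := hle y hy; omega
        · simp at hy; omega
      rw [insertT_cons_none (by rw [this])]
    · rw [insertT_cons_some h]
      rcases h2 : (insertRow (insertRow R x₁).1 x₂).2 with _ | z₂
      · rw [insertT_cons_none h2]; simp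
      · rw [insertT_cons_some h2]
        have hz : z₁ < z₂ := insertRow_gt_bump (hs R (by simp)) h12 h h2
        have := ih z₁ z₂ (fun R' h' => hs R' (by simp [h'])) hz
        simpa using this

theorem bump_gt : ∀ (T : Tab) (x₁ x₂ : ℕ), x₂ < x₁ →
    (insertT T x₁).2 < (insertT (insertT T x₁).1 x₂).2 := by
  intro T
  induction T with
  | nil =>
    intro x₁ x₂ h12
    rw [insertT_nil]
    have h1 : insertRow [x₁] x₂ = ([x₂], some x₁) := by
      simp [insertRow_nil, insertRow_cons, h12]
    rw [insertT_cons_some (by rw [h1])]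
    simp
  | cons R T ih =>
    intro x₁ x₂ h12
    rcases h : (insertRow R x₁).2 with _ | z₁
    · rw [insertT_cons_none h]
      rcases insertRow_lt_bump_none h12 h with ⟨z₂, hz₂⟩
      rw [insertT_cons_some hz₂]
      simp
    · rw [insertT_cons_some h]
      rcases insertRow_lt_bump_some h12 h with ⟨z₂, hz₂, hlt⟩
      rw [insertT_cons_some hz₂]
      have := ih z₁ z₂ hlt
      simpa using this

theorem placeEntry_getD : ∀ {Q : Tab} {i : ℕ}, i ≤ Q.length → ∀ (k j : ℕ),
    (placeEntry Q i k).getD j [] = if j = i then Q.getD i [] ++ [k] else Q.getD j [] := by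
  intro Q
  induction Q with
  | nil =>
    intro i hi k j
    have : i = 0 := by simpa using hi
    subst this
    rw [placeEntry_nil]
    cases j with
    | zero => simp
    | succ j => simp
  | cons R T ih =>
    intro i hi k j
    cases i with
    | zero =>
      rw [placeEntry_cons_zero]
      cases j with
      | zero => simp
      | succ j => simp
    | succ i =>
      rw [placeEntry_cons_succ]
      cases j with
      | zero => simp
      | succ j =>
        simp only [List.getD_cons_succ]
        rw [ih (by simpa using hi) k j]
        by_cases hc : j = i
        · rw [if_pos hc, if_pos (by omega)]
        · rw [if_neg hc, if_neg (by omega)]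

/-- `t` lies in row `i` of `Q` and in no earlier row. -/
def InRow (Q : Tab) (t i : ℕ) : Prop :=
  t ∈ Q.getD i [] ∧ ∀ j < i, t ∉ Q.getD j []

theorem mem_getD_flatten {Q : Tab} {t j : ℕ} (h : t ∈ Q.getD j []) : t ∈ Q.flatten := by
  by_cases hj : j < Q.length
  · rw [List.getD_eq_getElem _ _ hj] at h
    exact List.mem_flatten.2 ⟨Q[j], List.getElem_mem hj, h⟩
  · rw [List.getD_eq_default _ _ (by omega)] at h
    simp at h

theorem InRow.rowOfEntry_eq {Q : Tab} {t i : ℕ} (h : InRow Q t i) : rowOfEntry Q t = i := by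
  have hi : i < Q.length := by
    by_contra hc
    have h1 := h.1
    rw [List.getD_eq_default _ _ (by omega)] at h1
    simp at h1
  rw [rowOfEntry, List.findIdx_eq hi]
  constructor
  · have := h.1
    rw [List.getD_eq_getElem _ _ hi] at this
    simpa using this
  · intro j hj
    have := h.2 j hj
    rw [List.getD_eq_getElem _ _ (by omega)] at this
    simpa using this

theorem InRow_placeEntry {Q : Tab} {t i k j : ℕ} (hj : j ≤ Q.length) (h : InRow Q t i)
    (hk : k ≠ t) : InRow (placeEntry Q j k) t i := by
  constructor
  · rw [placeEntry_getD hj]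
    by_cases hc : i = j
    · rw [if_pos hc, ← hc]
      exact List.mem_append.2 (Or.inl h.1)
    · rw [if_neg hc]; exact h.1
  · intro j' hj'
    rw [placeEntry_getD hj]
    by_cases hc : j' = j
    · rw [if_pos hc, ← hc]
      intro hmem
      rcases List.mem_append.1 hmem with hm | hm
      · exact h.2 j' hj' hm
      · simp at hm; exact hk hm.symm
    · rw [if_neg hc]; exact h.2 j' hj'

theorem InRow_placeEntry_self {Q : Tab} {k i : ℕ} (hi : i ≤ Q.length)
    (hk : k ∉ Q.flatten) : InRow (placeEntry Q i k) k i := by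
  constructor
  · rw [placeEntry_getD hi, if_pos rfl]
    simp
  · intro j hj
    rw [placeEntry_getD hi, if_neg (by omega)]
    exact fun hm => hk (mem_getD_flatten hm)

theorem fold_InRow : ∀ (l : List (ℕ × ℕ)) (P Q : Tab) (t i : ℕ), P.length = Q.length →
    t ∉ l.map Prod.fst → InRow Q t i → InRow (l.foldl rsStep (P, Q)).2 t i := by
  intro l
  induction l with
  | nil => intro P Q t i _ _ h; exact h
  | cons pv l ih =>
    intro P Q t i hlen ht h
    simp only [List.foldl_cons]
    apply ih
    · rw [insertT_length, placeEntry_length (by rw [← hlen]; exact insertT_snd_le P pv.2)]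
      rw [← hlen]
    · exact fun hm => ht (by simp [List.mem_map] at hm ⊢; exact Or.inr hm)
    · exact InRow_placeEntry (by rw [← hlen]; exact insertT_snd_le P pv.2) h
        (fun he => ht (by simp [he.symm]))

theorem rows_lt_of_flatten {T : Tab} {m : ℕ} (h : ∀ y ∈ T.flatten, y < m) :
    ∀ R ∈ T, ∀ y ∈ R, y < m :=
  fun R hR y hy => h y (List.mem_flatten.2 ⟨R, hR, hy⟩)

theorem fold_commute {m ts : ℕ} : ∀ (L : List (ℕ × ℕ)) (P Q : Tab) (r : ℕ),
    (∀ pv ∈ L, pv.2 < m) →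
    (∀ y ∈ P.flatten, y < m) →
    (∀ pv ∈ L, ts < pv.1 ∧ ∀ y ∈ Q.flatten, y < pv.1) →
    List.Pairwise (fun a b : ℕ × ℕ => a.1 < b.1) L →
    r ≤ P.length → P.length = Q.length → (insertT Q ts).2 = r →
    L.foldl rsStep (placeEntry P r m, (insertT Q ts).1) =
      (placeEntry (L.foldl rsStep (P, Q)).1 (insertT (L.foldl rsStep (P, Q)).2 ts).2 m,
        (insertT (L.foldl rsStep (P, Q)).2 ts).1) := by
  intro L
  induction L with
  | nil =>
    intro P Q r _ _ _ _ _ _ hr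
    simp only [List.foldl_nil]
    rw [hr]
  | cons pv L ih =>
    rcases pv with ⟨tp, y⟩
    intro P Q r hbot hPm hQtop hpw hr hlen hQr
    have hym : y < m := hbot (tp, y) (by simp)
    have hts : ts < tp := (hQtop (tp, y) (by simp)).1
    have hQtp : ∀ y' ∈ Q.flatten, y' < tp := (hQtop (tp, y) (by simp)).2
    have hsle : (insertT P y).2 ≤ P.length := insertT_snd_le P y
    have hpwh : ∀ b ∈ L, tp < b.1 := fun b hb => (List.pairwise_cons.1 hpw).1 b hb
    have hL1P := insertT_place P r y hym (rows_lt_of_flatten hPm) hr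
    have hL1Q := insertT_place Q (insertT P y).2 ts hts (rows_lt_of_flatten hQtp)
      (by omega)
    rw [hQr] at hL1Q
    simp only [List.foldl_cons]
    have hstep : rsStep (placeEntry P r m, (insertT Q ts).1) (tp, y) =
        (placeEntry (insertT P y).1 (if (insertT P y).2 = r then r + 1 else r) m,
          (insertT (placeEntry Q (insertT P y).2 tp) ts).1) := by
      rw [rsStep]
      simp only
      rw [hL1P]
      congr 1
      rw [hL1Q]
      simp only
      by_cases hc : (insertT P y).2 = r
      · subst hc; simp
      · rw [if_neg hc, if_neg (fun h => hc h.symm)]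
    rw [hstep]
    have hstep2 : rsStep (P, Q) (tp, y) =
        ((insertT P y).1, placeEntry Q (insertT P y).2 tp) := rfl
    rw [hstep2]
    refine ih (insertT P y).1 (placeEntry Q (insertT P y).2 tp) _
      (fun pv h => hbot pv (by simp [h]))
      (fun y' hy' => ?_) (fun pv h => ⟨(hQtop pv (by simp [h])).1, fun y' hy' => ?_⟩)
      (hpw.sublist (List.sublist_cons_self _ _)) ?_ ?_ ?_
    · rcases List.mem_cons.1 ((insertT_flatten_perm P y).mem_iff.1 hy') with rfl | h
      · exact hym
      · exact hPm y' h
    · rcases List.mem_cons.1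
          ((placeEntry_flatten_perm Q (insertT P y).2 tp).mem_iff.1 hy') with rfl | h'
      · exact hpwh pv h
      · exact (hQtop pv (by simp [h])).2 y' h'
    · rw [insertT_length]
      by_cases hc : (insertT P y).2 = r
      · rw [if_pos hc]
        by_cases hc2 : (insertT P y).2 = P.length
        · rw [if_pos hc2]; omega
        · rw [if_neg hc2]; omega
      · rw [if_neg hc]
        split <;> omega
    · rw [insertT_length, placeEntry_length (by omega), ← hlen]
    · rw [hL1Q]
      simp only
      by_cases hc : (insertT P y).2 = r
      · subst hc; simp
      · rw [if_neg (fun h => hc h.symm), if_neg hc]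


theorem rs_symm : ∀ (N : ℕ) (L M : List (ℕ × ℕ)), L.length ≤ N →
    List.Pairwise (fun a b : ℕ × ℕ => a.1 < b.1) L →
    List.Pairwise (fun a b : ℕ × ℕ => a.1 < b.1) M →
    (∀ a b : ℕ, (a, b) ∈ L ↔ (b, a) ∈ M) →
    (L.foldl rsStep ([], [])).1 = (M.foldl rsStep ([], [])).2 ∧
    (L.foldl rsStep ([], [])).2 = (M.foldl rsStep ([], [])).1 := by
  intro N
  induction N with
  | zero =>
    intro L M hN _ _ hmem
    have hL0 : L = [] := List.length_eq_zero_iff.1 (by omega)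
    subst hL0
    have hM0 : M = [] := by
      refine List.eq_nil_iff_forall_not_mem.2 fun x hx => ?_
      have := (hmem x.2 x.1).2 (by simpa using hx)
      simp at this
    subst hM0; exact ⟨rfl, rfl⟩
  | succ N ih =>
    intro L M hN hL hM hmem
    rcases List.eq_nil_or_concat M with rfl | ⟨M', b, rfl⟩
    · have hL0 : L = [] := by
        refine List.eq_nil_iff_forall_not_mem.2 fun x hx => ?_
        have := (hmem x.1 x.2).1 (by simpa using hx)
        simp at this
      subst hL0; exact ⟨rfl, rfl⟩
    · rcases b with ⟨m, ts⟩
      rw [List.concat_eq_append] at hM hmem ⊢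
      have hmemL : (ts, m) ∈ L := (hmem ts m).2 (by simp)
      rcases List.append_of_mem hmemL with ⟨L₁, L₂, rfl⟩
      have hndL : (L₁ ++ (ts, m) :: L₂).Nodup :=
        hL.imp (fun {a b} h => fun he => by rw [he] at h; exact lt_irrefl _ h)
      have hndM : (M' ++ [(m, ts)]).Nodup :=
        hM.imp (fun {a b} h => fun he => by rw [he] at h; exact lt_irrefl _ h)
      have hnotmid : (ts, m) ∉ L₁ ++ L₂ := by
        have := List.nodup_middle.1 hndL
        exact (List.nodup_cons.1 this).1
      have hnotM' : (m, ts) ∉ M' := by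
        rcases List.nodup_append.1 hndM with ⟨_, _, hd⟩
        exact fun h => hd _ h _ (by simp) rfl
      have hM'lt : ∀ x ∈ M', x.1 < m := by
        intro x hx
        have := (List.pairwise_append.1 hM).2.2 x hx (m, ts) (by simp)
        exact this
      have hvlt : ∀ p v : ℕ, (p, v) ∈ L₁ ++ L₂ → v < m := by
        intro p v hpv
        have hpvL : (p, v) ∈ L₁ ++ (ts, m) :: L₂ := by
          rcases List.mem_append.1 hpv with h | h
          · exact List.mem_append.2 (Or.inl h)
          · exact List.mem_append.2 (Or.inr (List.mem_cons_of_mem _ h))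
        have hvM := (hmem p v).1 hpvL
        rcases List.mem_append.1 hvM with h | h
        · exact hM'lt _ h
        · simp at h
          exfalso
          obtain ⟨rfl, rfl⟩ := h
          exact hnotmid hpv
      have hmem' : ∀ a b : ℕ, (a, b) ∈ L₁ ++ L₂ ↔ (b, a) ∈ M' := by
        intro a b
        constructor
        · intro h
          have hL' : (a, b) ∈ L₁ ++ (ts, m) :: L₂ := by
            rcases List.mem_append.1 h with h' | h'
            · exact List.mem_append.2 (Or.inl h')
            · exact List.mem_append.2 (Or.inr (List.mem_cons_of_mem _ h'))
          have := (hmem a b).1 hL'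
          rcases List.mem_append.1 this with h' | h'
          · exact h'
          · simp at h'
            exfalso
            obtain ⟨rfl, rfl⟩ := h'
            exact hnotmid h
        · intro h
          have := (hmem a b).2 (List.mem_append.2 (Or.inl h))
          rcases List.mem_append.1 this with h' | h'
          · exact List.mem_append.2 (Or.inl h')
          · rcases List.mem_cons.1 h' with h'' | h''
            · exfalso
              have : (b, a) = (m, ts) := by
                have h1 : a = ts := congrArg Prod.fst h''
                have h2 : b = m := congrArg Prod.snd h''
                rw [h1, h2]
              rw [this] at h
              exact hnotM' h
            · exact List.mem_append.2 (Or.inr h'')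
      have hpwL' : List.Pairwise (fun a b : ℕ × ℕ => a.1 < b.1) (L₁ ++ L₂) :=
        hL.sublist ((List.sublist_cons_self _ _).append_left L₁)
      have hpwM' : List.Pairwise (fun a b : ℕ × ℕ => a.1 < b.1) M' :=
        hM.sublist (List.sublist_append_left _ _)
      have hlen' : (L₁ ++ L₂).length ≤ N := by
        simp only [List.length_append, List.length_cons] at hN ⊢
        omega
      obtain ⟨ih1, ih2⟩ := ih (L₁ ++ L₂) M' hlen' hpwL' hpwM' hmem'
      -- compute fold over M
      rw [List.foldl_append]
      rw [List.foldl_append]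
      simp only [List.foldl_cons, List.foldl_nil]
      set P₀ := (L₁.foldl rsStep (([] : Tab), ([] : Tab))).1 with hP₀def
      set Q₀ := (L₁.foldl rsStep (([] : Tab), ([] : Tab))).2 with hQ₀def
      have hP₀m : ∀ y ∈ P₀.flatten, y < m := by
        intro y hy
        have := (fold_fst_flatten L₁ [] []).mem_iff.1 hy
        simp only [List.flatten_nil, List.append_nil, List.mem_reverse, List.mem_map] at this
        rcases this with ⟨pv, hpv, rfl⟩
        exact hvlt pv.1 pv.2 (List.mem_append.2 (Or.inl hpv))
      have hpwsplit := List.pairwise_append.1 hL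
      have hQ₀lt : ∀ c : ℕ × ℕ, c ∈ (ts, m) :: L₂ → ∀ y ∈ Q₀.flatten, y < c.1 := by
        intro c hc y hy
        have := (fold_snd_flatten L₁ [] []).mem_iff.1 hy
        simp only [List.flatten_nil, List.append_nil, List.mem_reverse, List.mem_map] at this
        rcases this with ⟨pv, hpv, rfl⟩
        exact hpwsplit.2.2 pv hpv c hc
      have hQ₀ts : ∀ y ∈ Q₀.flatten, y < ts := hQ₀lt (ts, m) (by simp)
      have hlenPQ : P₀.length = Q₀.length := fold_length L₁ [] [] rfl
      have hinsP : insertT P₀ m = (placeEntry P₀ 0 m, 0) :=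
        insertT_max (rows_lt_of_flatten hP₀m)
      have hinsQ : insertT Q₀ ts = (placeEntry Q₀ 0 ts, 0) :=
        insertT_max (rows_lt_of_flatten hQ₀ts)
      have hstep : rsStep (P₀, Q₀) (ts, m) = (placeEntry P₀ 0 m, (insertT Q₀ ts).1) := by
        rw [rsStep]
        simp only
        rw [hinsP, hinsQ]
      rw [hstep]
      have hcomm := fold_commute (m := m) (ts := ts) L₂ P₀ Q₀ 0
        (fun pv h => hvlt pv.1 pv.2 (List.mem_append.2 (Or.inr h)))
        hP₀m
        (fun pv h => ⟨(List.pairwise_cons.1 hpwsplit.2.1).1 pv h,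
          hQ₀lt pv (List.mem_cons_of_mem _ h)⟩)
        (List.pairwise_cons.1 hpwsplit.2.1).2
        (Nat.zero_le _) hlenPQ (by rw [hinsQ])
      rw [hcomm]
      have hfoldL' : L₂.foldl rsStep (P₀, Q₀) = (L₁ ++ L₂).foldl rsStep ([], []) := by
        rw [List.foldl_append]
      rw [hfoldL'] at *
      rw [ih1, ih2]
      exact ⟨rfl, rfl⟩

theorem consec_rows {l₁ l₂ : List (ℕ × ℕ)} {t₁ y₁ t₂ y₂ : ℕ}
    (hp : List.Pairwise (fun a b : ℕ × ℕ => a.1 < b.1)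
      (l₁ ++ (t₁, y₁) :: (t₂, y₂) :: l₂))
    (hb : ((l₁ ++ (t₁, y₁) :: (t₂, y₂) :: l₂).map Prod.snd).Nodup) :
    (rowOfEntry ((l₁ ++ (t₁, y₁) :: (t₂, y₂) :: l₂).foldl rsStep ([], [])).2 t₁ <
      rowOfEntry ((l₁ ++ (t₁, y₁) :: (t₂, y₂) :: l₂).foldl rsStep ([], [])).2 t₂) ↔
    y₂ < y₁ := by
  have hsplit := List.pairwise_append.1 hp
  have h12 : t₁ < t₂ := (List.pairwise_cons.1 hsplit.2.1).1 (t₂, y₂) (by simp)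
  have ht₁l₂ : ∀ c ∈ l₂, t₁ < c.1 :=
    fun c hc => (List.pairwise_cons.1 hsplit.2.1).1 c (by simp [hc])
  have ht₂l₂ : ∀ c ∈ l₂, t₂ < c.1 :=
    fun c hc => (List.pairwise_cons.1 (List.pairwise_cons.1 hsplit.2.1).2).1 c hc
  rw [List.foldl_append]
  simp only [List.foldl_cons]
  set P₀ := (l₁.foldl rsStep (([] : Tab), ([] : Tab))).1 with hP₀def
  set Q₀ := (l₁.foldl rsStep (([] : Tab), ([] : Tab))).2 with hQ₀def
  have hlen₀ : P₀.length = Q₀.length := fold_length l₁ [] [] rfl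
  -- bottoms of l₁ are nodup and y₁, y₂ fresh
  have hbsplit : (l₁.map Prod.snd ++ y₁ :: y₂ :: l₂.map Prod.snd).Nodup := by
    simpa using hb
  have hy12 : y₁ ≠ y₂ := by
    rcases List.nodup_append.1 hbsplit with ⟨_, h2, _⟩
    intro he
    exact (List.nodup_cons.1 h2).1 (by simp [he])
  -- sortedness of P₀ rows
  have hsorted : ∀ R ∈ P₀, R.Pairwise (· < ·) := by
    apply fold_rowsSorted l₁ [] []
    · simp
    · simpa using (List.nodup_append.1 hbsplit).1
  -- Q₀ entries are among tops of l₁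
  have hQ₀mem : ∀ y ∈ Q₀.flatten, y ∈ l₁.map Prod.fst := by
    intro y hy
    have := (fold_snd_flatten l₁ [] []).mem_iff.1 hy
    simpa using this
  have ht₁Q₀ : t₁ ∉ Q₀.flatten := by
    intro h
    rcases List.mem_map.1 (hQ₀mem t₁ h) with ⟨pv, hpv, he⟩
    have := hsplit.2.2 pv hpv (t₁, y₁) (by simp)
    omega
  have ht₂Q₀ : t₂ ∉ Q₀.flatten := by
    intro h
    rcases List.mem_map.1 (hQ₀mem t₂ h) with ⟨pv, hpv, he⟩
    have := hsplit.2.2 pv hpv (t₂, y₂) (by simp)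
    omega
  -- first step
  have hs₁le : (insertT P₀ y₁).2 ≤ P₀.length := insertT_snd_le P₀ y₁
  have hIn₁ : InRow (placeEntry Q₀ (insertT P₀ y₁).2 t₁) t₁ (insertT P₀ y₁).2 :=
    InRow_placeEntry_self (by omega) ht₁Q₀
  have hlen₁ : (insertT P₀ y₁).1.length = (placeEntry Q₀ (insertT P₀ y₁).2 t₁).length := by
    rw [insertT_length, placeEntry_length (by omega), ← hlen₀]
  have hs₂le : (insertT (insertT P₀ y₁).1 y₂).2 ≤ (insertT P₀ y₁).1.length :=
    insertT_snd_le _ y₂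
  have ht₂Q₁ : t₂ ∉ (placeEntry Q₀ (insertT P₀ y₁).2 t₁).flatten := by
    intro h
    rcases List.mem_cons.1
        ((placeEntry_flatten_perm Q₀ (insertT P₀ y₁).2 t₁).mem_iff.1 h) with he | h'
    · omega
    · exact ht₂Q₀ h'
  have hIn₂ : InRow (placeEntry (placeEntry Q₀ (insertT P₀ y₁).2 t₁)
      (insertT (insertT P₀ y₁).1 y₂).2 t₂) t₂ (insertT (insertT P₀ y₁).1 y₂).2 :=
    InRow_placeEntry_self (by omega) ht₂Q₁
  have hIn₁' : InRow (placeEntry (placeEntry Q₀ (insertT P₀ y₁).2 t₁)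
      (insertT (insertT P₀ y₁).1 y₂).2 t₂) t₁ (insertT P₀ y₁).2 :=
    InRow_placeEntry (by omega) hIn₁ (by omega)
  have hlen₂ : (insertT (insertT P₀ y₁).1 y₂).1.length =
      (placeEntry (placeEntry Q₀ (insertT P₀ y₁).2 t₁)
        (insertT (insertT P₀ y₁).1 y₂).2 t₂).length := by
    rw [insertT_length, placeEntry_length (by omega), ← hlen₁]
  have hrow₁ : rowOfEntry (l₂.foldl rsStep
      (rsStep (rsStep (P₀, Q₀) (t₁, y₁)) (t₂, y₂))).2 t₁ = (insertT P₀ y₁).2 := by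
    apply InRow.rowOfEntry_eq
    apply fold_InRow l₂ _ _ _ _ hlen₂ _ hIn₁'
    intro h
    rcases List.mem_map.1 h with ⟨pv, hpv, he⟩
    have := ht₁l₂ pv hpv
    omega
  have hrow₂ : rowOfEntry (l₂.foldl rsStep
      (rsStep (rsStep (P₀, Q₀) (t₁, y₁)) (t₂, y₂))).2 t₂ =
      (insertT (insertT P₀ y₁).1 y₂).2 := by
    apply InRow.rowOfEntry_eq
    apply fold_InRow l₂ _ _ _ _ hlen₂ _ hIn₂
    intro h
    rcases List.mem_map.1 h with ⟨pv, hpv, he⟩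
    have := ht₂l₂ pv hpv
    omega
  rw [hrow₁, hrow₂]
  constructor
  · intro h
    by_contra hc
    have : y₁ < y₂ := by omega
    have := bump_le P₀ y₁ y₂ hsorted this
    omega
  · intro h
    exact bump_gt P₀ y₁ y₂ h

theorem oneLine_lt {n : ℕ} (w : Equiv.Perm (Fin n × Bool)) {p : ℕ} (h : p < n) :
    oneLine w p = (((w (⟨p, h⟩, false)).1 : ℕ), (w (⟨p, h⟩, false)).2) := by
  rw [oneLine, dif_pos h]

theorem oneLine_fst_lt {n : ℕ} (w : Equiv.Perm (Fin n × Bool)) {p : ℕ} (h : p < n) :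
    (oneLine w p).1 < n := by
  rw [oneLine_lt w h]
  exact (w (⟨p, h⟩, false)).1.isLt

theorem mem_twoLine {n : ℕ} (w : Equiv.Perm (Fin n × Bool)) (barred : Bool) (a b : ℕ) :
    (a, b) ∈ twoLine w barred ↔
      ∃ p v : Fin n, a = (p : ℕ) + 1 ∧ b = (v : ℕ) + 1 ∧ w (p, false) = (v, barred) := by
  rw [twoLine]
  simp only [List.mem_map, List.mem_filter, List.mem_range, decide_eq_true_eq]
  constructor
  · rintro ⟨p, ⟨hp, hst⟩, heq⟩
    rw [oneLine_lt w hp] at hst heq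
    refine ⟨⟨p, hp⟩, (w (⟨p, hp⟩, false)).1, ?_, ?_, ?_⟩
    · exact (congrArg Prod.fst heq).symm
    · exact (congrArg Prod.snd heq).symm
    · exact Prod.ext rfl hst
  · rintro ⟨p, v, rfl, rfl, heq⟩
    refine ⟨(p : ℕ), ⟨p.isLt, ?_⟩, ?_⟩
    · rw [oneLine_lt w p.isLt]
      simp only [Fin.eta, heq]
    · rw [oneLine_lt w p.isLt]
      simp only [Fin.eta, heq]

theorem signed_iff {n : ℕ} {w : Equiv.Perm (Fin n × Bool)} (hw : IsSignedPerm w)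
    (p v : Fin n) (c : Bool) : w (p, false) = (v, c) ↔ w (p, c) = (v, false) := by
  cases c
  · exact Iff.rfl
  · constructor
    · intro h
      have h2 := hw (p, false)
      rw [h] at h2
      simpa using h2
    · intro h
      have h2 := hw (p, true)
      rw [h] at h2
      simpa using h2

theorem mem_twoLine_symm {n : ℕ} {w : Equiv.Perm (Fin n × Bool)} (hw : IsSignedPerm w)
    (barred : Bool) (a b : ℕ) :
    (a, b) ∈ twoLine w.symm barred ↔ (b, a) ∈ twoLine w barred := by
  rw [mem_twoLine, mem_twoLine]
  constructor
  · rintro ⟨p, v, rfl, rfl, heq⟩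
    refine ⟨v, p, rfl, rfl, ?_⟩
    rw [signed_iff hw]
    exact (Equiv.symm_apply_eq w).1 heq |>.symm
  · rintro ⟨p, v, rfl, rfl, heq⟩
    refine ⟨v, p, rfl, rfl, ?_⟩
    rw [Equiv.symm_apply_eq]
    exact ((signed_iff hw p v barred).1 heq).symm

theorem twoLine_pairwise {n : ℕ} (w : Equiv.Perm (Fin n × Bool)) (barred : Bool) :
    List.Pairwise (fun x y : ℕ × ℕ => x.1 < y.1) (twoLine w barred) := by
  rw [twoLine]
  refine List.pairwise_map.2 ?_
  refine List.Pairwise.filter _ ?_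
  refine List.Pairwise.imp ?_ (List.pairwise_lt_range (n := n))
  intro a b h
  omega

theorem twoLine_bottoms_nodup {n : ℕ} (w : Equiv.Perm (Fin n × Bool)) (barred : Bool) :
    ((twoLine w barred).map Prod.snd).Nodup := by
  rw [twoLine, List.map_map]
  refine List.Nodup.map_on ?_ ((List.nodup_range (n := n)).filter _)
  intro x hx y hy he
  have hx' : x < n := by simpa using (List.mem_filter.1 hx).1
  have hy' : y < n := by simpa using (List.mem_filter.1 hy).1
  have hsx : (oneLine w x).2 = barred := by simpa using (List.mem_filter.1 hx).2
  have hsy : (oneLine w y).2 = barred := by simpa using (List.mem_filter.1 hy).2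
  simp only [Function.comp] at he
  have hval : (oneLine w x).1 = (oneLine w y).1 := by omega
  rw [oneLine_lt w hx'] at hval hsx
  rw [oneLine_lt w hy'] at hval hsy
  have heq : w (⟨x, hx'⟩, false) = w (⟨y, hy'⟩, false) := by
    refine Prod.ext (Fin.ext ?_) (hsx.trans hsy.symm)
    simpa using hval
  have := w.injective heq
  have := congrArg Prod.fst this
  simpa using congrArg Fin.val this

theorem twoLine_decomp {n : ℕ} (w : Equiv.Perm (Fin n × Bool)) (barred : Bool) {p : ℕ}
    (h2 : p + 2 ≤ n) (hp : (oneLine w p).2 = barred)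
    (hp1 : (oneLine w (p + 1)).2 = barred) :
    ∃ l₁ l₂, twoLine w barred =
      l₁ ++ (p + 1, (oneLine w p).1 + 1) :: (p + 2, (oneLine w (p + 1)).1 + 1) :: l₂ := by
  rw [twoLine]
  have h1 : List.range n = List.range p ++ p :: (p + 1) ::
      (List.range (n - (p + 2))).map (fun x => (p + 2) + x) := by
    have h3 := List.range_add (n := p + 2) (m := n - (p + 2))
    rw [show (p + 2) + (n - (p + 2)) = n from by omega] at h3
    rw [h3, List.range_succ, List.range_succ]
    simp
  rw [h1, List.filter_append, List.map_append]
  rw [List.filter_cons_of_pos (by simpa using hp),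
    List.filter_cons_of_pos (by simpa using hp1)]
  refine ⟨List.map (fun q => (q + 1, (oneLine w q).1 + 1))
      (List.filter (fun q => decide ((oneLine w q).2 = barred)) (List.range p)),
    List.map (fun q => (q + 1, (oneLine w q).1 + 1))
      (List.filter (fun q => decide ((oneLine w q).2 = barred))
        (List.map (fun x => p + 2 + x) (List.range (n - (p + 2))))), ?_⟩
  simp only [List.map_cons]

theorem bool_eq_of_iff {a b : Bool} (h : a = true ↔ b = true) : a = b := by
  cases a <;> cases b <;> simp_all

theorem mem_rs_snd_iff {n : ℕ} (w : Equiv.Perm (Fin n × Bool)) {q : ℕ} (hq : q < n)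
    (barred : Bool) :
    (q + 1) ∈ (robinsonSchensted (twoLine w barred)).2.flatten ↔
      (oneLine w q).2 = barred := by
  rw [robinsonSchensted_eq]
  rw [(fold_snd_flatten (twoLine w barred) [] []).mem_iff]
  simp only [List.flatten_nil, List.append_nil, List.mem_reverse, List.mem_map]
  constructor
  · rintro ⟨pv, hpv, he⟩
    rcases pv with ⟨a, b⟩
    rcases (mem_twoLine w barred a b).1 hpv with ⟨p', v, rfl, rfl, heq⟩
    simp only at he
    have hpq : (p' : ℕ) = q := by omega
    rw [oneLine_lt w hq]
    have hfin : p' = ⟨q, hq⟩ := Fin.ext hpq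
    rw [hfin] at heq
    rw [heq]
  · intro hst
    refine ⟨(q + 1, ((w (⟨q, hq⟩, false)).1 : ℕ) + 1), ?_, rfl⟩
    rw [mem_twoLine]
    refine ⟨⟨q, hq⟩, (w (⟨q, hq⟩, false)).1, rfl, rfl, ?_⟩
    rw [oneLine_lt w hq] at hst
    exact Prod.ext rfl hst

theorem any_contains_eq {n : ℕ} (w : Equiv.Perm (Fin n × Bool)) {q : ℕ} (hq : q < n) :
    ((robinsonSchensted (twoLine w true)).2.any fun r => r.contains (q + 1)) =
      (oneLine w q).2 := by
  apply bool_eq_of_iff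
  rw [List.any_eq_true]
  constructor
  · rintro ⟨r, hr, hc⟩
    apply (mem_rs_snd_iff w hq true).1
    exact List.mem_flatten.2 ⟨r, hr, by simpa using hc⟩
  · intro hst
    rcases List.mem_flatten.1 ((mem_rs_snd_iff w hq true).2 hst) with ⟨r, hr, hmem⟩
    exact ⟨r, hr, by simpa using hmem⟩

theorem row_compare {n : ℕ} (w : Equiv.Perm (Fin n × Bool)) {p : ℕ} (barred : Bool)
    (h2 : p + 2 ≤ n) (hp : (oneLine w p).2 = barred)
    (hp1 : (oneLine w (p + 1)).2 = barred) :
    (rowOfEntry (robinsonSchensted (twoLine w barred)).2 (p + 1) <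
      rowOfEntry (robinsonSchensted (twoLine w barred)).2 (p + 2) ↔
      (oneLine w (p + 1)).1 < (oneLine w p).1) := by
  rcases twoLine_decomp w barred h2 hp hp1 with ⟨l₁, l₂, hdec⟩
  have hpw := twoLine_pairwise w barred
  have hnd := twoLine_bottoms_nodup w barred
  rw [hdec] at hpw hnd
  rw [robinsonSchensted_eq, hdec]
  exact (consec_rows hpw hnd).trans (by omega)

end RSAux

/-- For every signed permutation `w ∈ B_n`: `sDes(w) = sDes(Q^B(w))`, and
`P^B(w⁻¹) = Q^B(w)`. -/
theorem sDes_QB_and_PB_inv (n : ℕ) (hn : 0 < n) (w : Equiv.Perm (Fin n × Bool))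
    (hw : IsSignedPerm w) :
    sDesPerm w = sDesBitab (QB w).1 (QB w).2 n ∧ PB w.symm = QB w := by
  classical
  have hPBQB : PB w.symm = QB w := by
    have hside : ∀ barred : Bool,
        (robinsonSchensted (twoLine w.symm barred)).1 =
          (robinsonSchensted (twoLine w barred)).2 := by
      intro barred
      rw [RSAux.robinsonSchensted_eq, RSAux.robinsonSchensted_eq]
      exact (RSAux.rs_symm (twoLine w.symm barred).length (twoLine w.symm barred)
        (twoLine w barred) le_rfl (RSAux.twoLine_pairwise _ _)
        (RSAux.twoLine_pairwise _ _)
        (fun a b => RSAux.mem_twoLine_symm hw barred a b)).1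
    rw [PB, QB, hside false, hside true]
  refine ⟨?_, hPBQB⟩
  have hQB1 : (QB w).1 = (robinsonSchensted (twoLine w false)).2 := rfl
  have hQB2 : (QB w).2 = (robinsonSchensted (twoLine w true)).2 := rfl
  have hinM : ∀ q : ℕ, q < n →
      ((QB w).2.any fun r => r.contains (q + 1)) = (oneLine w q).2 := fun q hq =>
    RSAux.any_contains_eq w hq
  funext p
  simp only [sDesPerm, sDesBitab]
  by_cases hpn : p + 1 = n
  · have hq : p < n := by omega
    rw [if_pos hpn, if_pos hpn]
    simp only [hinM p hq]
  · by_cases hlt : p + 1 < n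
    · have hq1 : p < n := by omega
      have hv1 : ((QB w).2.any fun r => r.contains (p + 1)) = (oneLine w p).2 :=
        hinM p hq1
      have hv2 : ((QB w).2.any fun r => r.contains (p + 2)) = (oneLine w (p + 1)).2 :=
        hinM (p + 1) hlt
      rw [if_neg hpn, if_neg hpn]
      simp only [hv1, hv2]
      have ha2 : (oneLine w (p + 1)).1 < n := RSAux.oneLine_fst_lt w hlt
      cases hb1 : (oneLine w p).2 <;> cases hb2 : (oneLine w (p + 1)).2
      · -- both unbarred
        have hrow := RSAux.row_compare w false (by omega) hb1 hb2
        rw [← hQB1] at hrow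
        refine if_congr ?_ rfl rfl
        simp only [rOrd, hb1, hb2]
        simp [hrow] <;> omega
      · -- p unbarred, p+1 barred
        rw [if_pos ?_, if_pos ?_]
        · exact ⟨hlt, Or.inr (by simp [hb1, hb2])⟩
        · refine ⟨hlt, Or.inl ?_⟩
          simp only [rOrd, hb1, hb2]
          simp <;> omega
      · -- p barred, p+1 unbarred
        rw [if_pos ?_, if_pos ?_]
        · exact ⟨hlt, Or.inr (by simp [hb1, hb2])⟩
        · exact ⟨hlt, Or.inr ⟨rfl, rfl⟩⟩
      · -- both barred
        have hrow := RSAux.row_compare w true (by omega) hb1 hb2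
        rw [← hQB2] at hrow
        refine if_congr ?_ rfl rfl
        simp only [rOrd, hb1, hb2]
        simp [hrow] <;> omega
    · rw [if_neg hpn, if_neg hpn, if_neg (fun h => hlt h.1), if_neg (fun h => hlt h.1)]
end

section
/- Let A_n be the 2·3^{n−1} × 2·3^{n−1} matrix whose rows are indexed by signed compositions γ of n, columns by signed sets σ ∈ Σ^B(n), with entry wt_γ(σ). Then |det(A_n)| = Π_{γ} m_γ, where for a signed composition γ with k parts of absolute sizes γ₁,...,γ_k, m_γ = 2^{k/2}·Π_i γ_i. In particular, A_n is invertible. -/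
open Finset

/-- The first sign (`true` = barred = `−`) appearing in a list of optional signs. -/
def firstSign (l : List (Option Bool)) : Bool :=
  (l.filterMap id).headI

/-- Whether the `some` entries of a list form a prefix (no `some` after a `none`). -/
def somesArePrefix (l : List (Option Bool)) : Bool :=
  (l.dropWhile fun o => o.isSome).all fun o => o.isNone

/-- The weight `wt_γ(σ)` of a signed set `σ` (encoded as a word `l` over
`{0,1,*} = Option Bool`) with respect to a signed composition `γ`:
`wt_γ(σ) = 0` unless `S(σ)` is unimodal with respect to the underlying composition of
`γ` and the sign vector `ε̃` of `σ` is constant on each block of `γ`; otherwise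
`wt_γ(σ) = (−1)^{|S(σ) \ S(γ)| + n_γ(σ)}`, where `n_γ(σ)` is the number of blocks on
which both `γ` and `σ` assign the negative sign. -/
def wt : List (ℕ × Bool) → List (Option Bool) → ℤ
  | [], l => if l.isEmpty then 1 else 0
  | (a, b) :: t, l =>
      let blk := l.take a
      let inner := blk.take (a - 1)
      let sgn := firstSign l
      if somesArePrefix inner
          && ((List.range blk.length).all fun j => firstSign (l.drop j) == sgn) then
        (-1 : ℤ) ^ ((inner.filterMap id).length + (if b && sgn then 1 else 0))
          * wt t (l.drop a)
      else 0

/-- Decoding of a word over `{0,1,*}` (with last letter not `*`) into the signed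
composition it encodes. -/
def compOfWord : List (Option Bool) → List (ℕ × Bool)
  | [] => []
  | none :: t =>
      match compOfWord t with
      | [] => []
      | (a, b) :: r => (a + 1, b) :: r
  | some b :: t => (1, b) :: compOfWord t

/-- The set `Σ^B(n+1)` of signed sets, encoded as words of length `n+1` over `{0,1,*}`
whose last letter is not `*`. -/
def SignedSetWord (n : ℕ) : Type :=
  { w : Fin (n + 1) → Option Bool // w (Fin.last n) ≠ none }

noncomputable instance (n : ℕ) : Fintype (SignedSetWord n) := by
  unfold SignedSetWord; infer_instance

instance (n : ℕ) : DecidableEq (SignedSetWord n) := by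
  unfold SignedSetWord; infer_instance

/-- The weight matrix `A_{n+1}`, with rows indexed by signed compositions of `n+1`
(encoded as words) and columns by signed sets in `Σ^B(n+1)`, whose `(γ, σ)` entry is
`wt_γ(σ)`. -/
def weightMatrix (n : ℕ) : Matrix (SignedSetWord n) (SignedSetWord n) ℤ :=
  Matrix.of fun γ σ => wt (compOfWord (List.ofFn γ.1)) (List.ofFn σ.1)

/-- The length of the initial run of `*`-s in a word. -/
def starRun {n : ℕ} (w : SignedSetWord n) : ℕ :=
  ((List.ofFn w.1).takeWhile fun o => o.isNone).length

/-- The matrix `Â_{n+1}`, obtained from `A_{n+1}` by setting to zero all entries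
`(γ, σ)` for which the initial `*`-run of the row word is longer than that of the
column word. -/
def weightMatrixHat (n : ℕ) : Matrix (SignedSetWord n) (SignedSetWord n) ℤ :=
  Matrix.of fun γ σ => if starRun σ < starRun γ then 0 else weightMatrix n γ σ

/-- `A_{n+1}` as a real matrix. -/
noncomputable def weightMatrixR (n : ℕ) : Matrix (SignedSetWord n) (SignedSetWord n) ℝ :=
  Matrix.of fun γ σ => ((weightMatrix n γ σ : ℤ) : ℝ)

/-- `Â_{n+1}` as a real matrix. -/
noncomputable def weightMatrixHatR (n : ℕ) :
    Matrix (SignedSetWord n) (SignedSetWord n) ℝ :=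
  Matrix.of fun γ σ => ((weightMatrixHat n γ σ : ℤ) : ℝ)

/-- The list of (absolute) part sizes of the signed composition encoded by the word `γ`. -/
def partSizes {n : ℕ} (γ : SignedSetWord n) : List ℕ :=
  (compOfWord (List.ofFn γ.1)).map Prod.fst

abbrev OB := Option Bool
def nr (l : List OB) : ℕ := (l.takeWhile fun o => o.isNone).length

lemma firstSign_some (s : Bool) (w : List OB) : firstSign (some s :: w) = s := by
  simp [firstSign]

lemma firstSign_none (w : List OB) : firstSign (none :: w) = firstSign w := by
  simp [firstSign]

lemma somesArePrefix_some (s : Bool) (u : List OB) :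
    somesArePrefix (some s :: u) = somesArePrefix u := by
  simp [somesArePrefix, List.dropWhile]

lemma somesArePrefix_none (u : List OB) :
    somesArePrefix (none :: u) = u.all fun o => o.isNone := by
  simp [somesArePrefix, List.dropWhile]

lemma somesArePrefix_of_all_none {u : List OB} (h : u.all (fun o => o.isNone) = true) :
    somesArePrefix u = true := by
  induction u with
  | nil => rfl
  | cons x t ih =>
      simp only [List.all_cons, Bool.and_eq_true] at h
      cases x with
      | none => simpa [somesArePrefix_none] using h.2
      | some s => simp at h

lemma filterMap_id_of_all_none {u : List OB} (h : u.all (fun o => o.isNone) = true) :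
    u.filterMap id = [] := by
  induction u with
  | nil => rfl
  | cons x t ih =>
      simp only [List.all_cons, Bool.and_eq_true] at h
      cases x with
      | none => simpa using ih h.2
      | some s => simp at h

lemma wt_cons (a : ℕ) (b : Bool) (t : List (ℕ × Bool)) (l : List OB) :
    wt ((a, b) :: t) l =
      if somesArePrefix (l.take (a - 1))
          && ((List.range (l.take a).length).all fun j => firstSign (l.drop j) == firstSign l) then
        (-1 : ℤ) ^ (((l.take (a - 1)).filterMap id).length
            + (if b && firstSign l then 1 else 0)) * wt t (l.drop a)
      else 0 := by
  rw [wt]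
  simp [List.take_take, Nat.min_def]

lemma nr_none (l : List OB) : nr (none :: l) = nr l + 1 := by
  simp [nr, List.takeWhile_cons]

lemma nr_some (s : Bool) (l : List OB) : nr (some s :: l) = 0 := by
  simp [nr, List.takeWhile_cons]

lemma all_none_take (w : List OB) (m : ℕ) (hm : m ≤ w.length) :
    ((w.take m).all fun o => o.isNone) = true ↔ m ≤ nr w := by
  induction w generalizing m with
  | nil => simp at hm; simp [hm]
  | cons x t ih =>
      cases m with
      | zero => simp
      | succ m =>
          cases x with
          | none =>
              simp only [List.take_succ_cons, List.all_cons, nr_none]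
              have := ih m (by simpa using hm)
              simp [this]
          | some s => simp [nr_some]

lemma nr_lt_length {l : List OB} (u : List OB) (s : Bool) (h : l = u ++ [some s]) :
    nr l < l.length := by
  subst h
  induction u with
  | nil => simp [nr_some]
  | cons x t ih =>
      cases x with
      | none =>
          simp only [List.cons_append, nr_none, List.length_cons]
          omega
      | some s' => simp [nr_some]

lemma comp_head {l : List OB} (u : List OB) (s : Bool) (h : l = u ++ [some s]) :
    ∃ b t, compOfWord l = (nr l + 1, b) :: t := by
  subst h
  induction u with
  | nil => exact ⟨s, compOfWord [], by simp [compOfWord, nr_some]⟩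
  | cons x v ih =>
      cases x with
      | none =>
          obtain ⟨b, t, ht⟩ := ih
          refine ⟨b, t, ?_⟩
          simp only [List.cons_append, compOfWord, List.append_eq, ht, nr_none]
      | some s' =>
          exact ⟨s', compOfWord (v ++ [some s]), by simp [compOfWord, nr_some]⟩

lemma somesArePrefix_nil : somesArePrefix ([] : List OB) = true := rfl

lemma wt_some (b : Bool) (t : List (ℕ × Bool)) (x : OB) (w : List OB) :
    wt ((1, b) :: t) (x :: w) =
      (if b && firstSign (x :: w) then -1 else 1) * wt t w := by
  rw [wt_cons]
  simp [somesArePrefix_nil, apply_ite (fun k => (-1 : ℤ) ^ k)]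

lemma all_range_succ_drop (x : OB) (w : List OB) (m : ℕ) (s : Bool)
    (hx : firstSign (x :: w) = s) :
    ((List.range (m + 1)).all fun j => firstSign ((x :: w).drop j) == s)
      = ((List.range m).all fun j => firstSign (w.drop j) == s) := by
  rw [List.range_succ_eq_map, List.all_cons]
  simp [hx, List.all_map, Function.comp_def, List.drop_succ_cons]

lemma wt_none_some (a : ℕ) (b : Bool) (t : List (ℕ × Bool)) (s : Bool) (w : List OB)
    (hw : a + 1 ≤ w.length) :
    wt ((a + 2, b) :: t) (some s :: w)
      = if firstSign w = s then -wt ((a + 1, b) :: t) w else 0 := by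
  rw [wt_cons, wt_cons]
  have e1 : a + 2 - 1 = a + 1 := rfl
  have e2 : a + 1 - 1 = a := rfl
  have hblk : ((some s :: w).take (a + 2)).length = a + 2 := by
    simp [List.length_take]; omega
  have hblk2 : (w.take (a + 1)).length = a + 1 := by simp [List.length_take]; omega
  rw [e1, e2, hblk, hblk2, List.take_succ_cons, somesArePrefix_some, firstSign_some]
  by_cases hfs : firstSign w = s
  · rw [if_pos hfs, hfs,
      all_range_succ_drop (some s) w (a + 1) s (firstSign_some s w)]
    by_cases hC : (somesArePrefix (w.take a)
        && ((List.range (a + 1)).all fun j => firstSign (w.drop j) == s)) = true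
    · rw [if_pos hC, if_pos hC]
      simp only [List.filterMap_cons, id, List.length_cons, List.drop_succ_cons]
      ring
    · rw [if_neg hC, if_neg hC, neg_zero]
  · rw [if_neg hfs]
    have hfalse : ((List.range (a + 2)).all
        fun j => firstSign ((some s :: w).drop j) == s) = false := by
      refine List.all_eq_false.mpr ⟨1, List.mem_range.mpr (by omega), ?_⟩
      simp [List.drop_succ_cons, hfs]
    rw [hfalse, Bool.and_false, if_neg (by simp)]

lemma wt_none_none (a : ℕ) (b : Bool) (t : List (ℕ × Bool)) (w : List OB)
    (hw : a + 1 ≤ w.length) :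
    wt ((a + 2, b) :: t) (none :: w)
      = if a ≤ nr w then wt ((a + 1, b) :: t) w else 0 := by
  rw [wt_cons, wt_cons]
  have e1 : a + 2 - 1 = a + 1 := rfl
  have e2 : a + 1 - 1 = a := rfl
  have hblk : ((none :: w).take (a + 2)).length = a + 2 := by
    simp [List.length_take]; omega
  have hblk2 : (w.take (a + 1)).length = a + 1 := by simp [List.length_take]; omega
  rw [e1, e2, hblk, hblk2, List.take_succ_cons, somesArePrefix_none, firstSign_none,
    all_range_succ_drop none w (a + 1) (firstSign w) (firstSign_none w)]
  by_cases h : a ≤ nr w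
  · have hall : ((w.take a).all fun o => o.isNone) = true :=
      (all_none_take w a (by omega)).mpr h
    rw [if_pos h, hall, somesArePrefix_of_all_none hall]
    by_cases hC : ((List.range (a + 1)).all
        fun j => firstSign (w.drop j) == firstSign w) = true
    · rw [Bool.true_and, if_pos hC, if_pos hC]
      simp only [List.filterMap_cons, id, List.drop_succ_cons]
    · rw [Bool.true_and, if_neg hC, if_neg hC]
  · have hall : ((w.take a).all fun o => o.isNone) = false := by
      cases hh : (w.take a).all fun o => o.isNone
      · rfl
      · exact absurd ((all_none_take w a (by omega)).mp hh) h
    rw [if_neg h, hall, Bool.false_and, if_neg (by simp)]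

lemma exists_append_ofFn {n : ℕ} (w : SignedSetWord n) :
    ∃ u s, List.ofFn w.1 = u ++ [some s] := by
  obtain ⟨s, hs⟩ := Option.ne_none_iff_exists'.mp w.2
  exact ⟨List.ofFn fun i => w.1 i.castSucc, s, by
    rw [List.ofFn_succ', hs, List.concat_eq_append]⟩

lemma nr_ofFn_lt {n : ℕ} (w : SignedSetWord n) : nr (List.ofFn w.1) < n + 1 := by
  obtain ⟨u, s, h⟩ := exists_append_ofFn w
  simpa using nr_lt_length u s h

lemma starRun_eq_nr {n : ℕ} (w : SignedSetWord n) : starRun w = nr (List.ofFn w.1) := rfl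

/-- Prepending a letter to a signed-set word. -/
def consW {n : ℕ} (x : OB) (v : SignedSetWord n) : SignedSetWord (n + 1) :=
  ⟨Fin.cons x v.1, by
    have : Fin.last (n + 1) = (Fin.last n).succ := by simp [Fin.ext_iff]
    rw [this, Fin.cons_succ]; exact v.2⟩

lemma ofFn_consW {n : ℕ} (x : OB) (v : SignedSetWord n) :
    List.ofFn (consW x v).1 = x :: List.ofFn v.1 := by
  rw [consW, List.ofFn_succ]
  simp

lemma starRun_consW_none {n : ℕ} (v : SignedSetWord n) :
    starRun (consW none v) = starRun v + 1 := by
  rw [starRun_eq_nr, starRun_eq_nr, ofFn_consW, nr_none]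

lemma starRun_consW_some {n : ℕ} (b : Bool) (v : SignedSetWord n) :
    starRun (consW (some b) v) = 0 := by
  rw [starRun_eq_nr, ofFn_consW, nr_some]

lemma compOfWord_none_cons {l : List OB} {a : ℕ} {c : Bool} {t : List (ℕ × Bool)}
    (h : compOfWord l = (a, c) :: t) :
    compOfWord (none :: l) = (a + 1, c) :: t := by
  simp [compOfWord, h]

/-- The first-part decomposition of the composition of a word. -/
lemma comp_head_word {n : ℕ} (γ : SignedSetWord n) :
    ∃ c t, compOfWord (List.ofFn γ.1) = (starRun γ + 1, c) :: t := by
  obtain ⟨u, s, h⟩ := exists_append_ofFn γ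
  obtain ⟨c, t, ht⟩ := comp_head u s h
  exact ⟨c, t, by rw [ht, starRun_eq_nr]⟩

lemma wm_some {n : ℕ} (b : Bool) (γ : SignedSetWord n) (x : OB) (σ : SignedSetWord n) :
    weightMatrix (n + 1) (consW (some b) γ) (consW x σ)
      = (if b && firstSign (x :: List.ofFn σ.1) then -1 else 1) * weightMatrix n γ σ := by
  show wt (compOfWord (List.ofFn (consW (some b) γ).1)) (List.ofFn (consW x σ).1) = _
  rw [ofFn_consW, ofFn_consW,
    show compOfWord (some b :: List.ofFn γ.1) = (1, b) :: compOfWord (List.ofFn γ.1) from rfl]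
  exact wt_some b _ x _

lemma wm_none_some {n : ℕ} (γ : SignedSetWord n) (s : Bool) (σ : SignedSetWord n) :
    weightMatrix (n + 1) (consW none γ) (consW (some s) σ)
      = if firstSign (List.ofFn σ.1) = s then -weightMatrix n γ σ else 0 := by
  obtain ⟨c, t, ht⟩ := comp_head_word γ
  show wt (compOfWord (List.ofFn (consW none γ).1)) (List.ofFn (consW (some s) σ).1) = _
  rw [ofFn_consW, ofFn_consW, compOfWord_none_cons ht,
    show starRun γ + 1 + 1 = starRun γ + 2 from rfl]
  rw [wt_none_some (starRun γ) c t s (List.ofFn σ.1)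
    (by rw [List.length_ofFn]; have := nr_ofFn_lt γ; rw [← starRun_eq_nr] at this; omega)]
  rw [show weightMatrix n γ σ = wt (compOfWord (List.ofFn γ.1)) (List.ofFn σ.1) from rfl, ht]

lemma wm_none_none {n : ℕ} (γ : SignedSetWord n) (σ : SignedSetWord n) :
    weightMatrix (n + 1) (consW none γ) (consW none σ)
      = if starRun γ ≤ starRun σ then weightMatrix n γ σ else 0 := by
  obtain ⟨c, t, ht⟩ := comp_head_word γ
  show wt (compOfWord (List.ofFn (consW none γ).1)) (List.ofFn (consW none σ).1) = _
  rw [ofFn_consW, ofFn_consW, compOfWord_none_cons ht,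
    show starRun γ + 1 + 1 = starRun γ + 2 from rfl]
  rw [wt_none_none (starRun γ) c t (List.ofFn σ.1)
    (by rw [List.length_ofFn]; have := nr_ofFn_lt γ; rw [← starRun_eq_nr] at this; omega)]
  rw [show weightMatrix n γ σ = wt (compOfWord (List.ofFn γ.1)) (List.ofFn σ.1) from rfl, ht,
    starRun_eq_nr σ]

/-- Splitting a word of length `n+2` into its first letter and the rest. -/
def consEquiv (n : ℕ) : OB × SignedSetWord n ≃ SignedSetWord (n + 1) where
  toFun p := consW p.1 p.2
  invFun w := (w.1 0, ⟨Fin.tail w.1, by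
    show w.1 ((Fin.last n).succ) ≠ none
    rw [Fin.succ_last]
    exact w.2⟩)
  left_inv := by
    rintro ⟨x, v⟩
    refine Prod.ext ?_ (Subtype.ext ?_)
    · simp [consW]
    · simp [consW]
  right_inv := by
    rintro ⟨w, hw⟩
    exact Subtype.ext (Fin.cons_self_tail w)

lemma consEquiv_symm_apply (n : ℕ) (x : OB) (v : SignedSetWord n) :
    (consEquiv n).symm (consW x v) = (x, v) :=
  (consEquiv n).symm_apply_apply (x, v)

/-- Words of length `n+2` split into those starting with a sign and those starting `*`. -/
def splitEquiv (n : ℕ) : (Bool × SignedSetWord n) ⊕ SignedSetWord n ≃ SignedSetWord (n + 1) where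
  toFun x :=
    match x with
    | .inl (b, v) => consW (some b) v
    | .inr v => consW none v
  invFun w :=
    match ((consEquiv n).symm w).1 with
    | some b => .inl (b, ((consEquiv n).symm w).2)
    | none => .inr ((consEquiv n).symm w).2
  left_inv := by
    rintro (⟨b, v⟩ | v) <;> simp [consEquiv_symm_apply]
  right_inv := by
    intro w
    have hw : consW ((consEquiv n).symm w).1 ((consEquiv n).symm w).2 = w :=
      (consEquiv n).apply_symm_apply w
    rcases h : ((consEquiv n).symm w).1 with _ | b <;> simp [h] <;> rw [← hw, h] <;> simp [consEquiv_symm_apply]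

lemma splitEquiv_inl {n : ℕ} (b : Bool) (v : SignedSetWord n) :
    splitEquiv n (Sum.inl (b, v)) = consW (some b) v := rfl

lemma splitEquiv_inr {n : ℕ} (v : SignedSetWord n) :
    splitEquiv n (Sum.inr v) = consW none v := rfl

/-- `Σ^B(1)` has two elements. -/
def boolEquiv : Bool ≃ SignedSetWord 0 where
  toFun b := ⟨fun _ => some b, by simp⟩
  invFun w := (w.1 0).getD false
  left_inv b := by simp
  right_inv := by
    rintro ⟨w, hw⟩
    refine Subtype.ext (funext fun i => ?_)
    cases hh : w (Fin.last 0) with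
    | none => exact absurd hh hw
    | some b =>
        have h0 : w 0 = some b := hh
        have hi : i = 0 := Fin.ext (by omega)
        subst hi
        show some ((w 0).getD false) = w 0
        rw [h0]
        rfl

open Kronecker

/-- The `2×2` sign matrix. -/
def Kmat : Matrix Bool Bool ℤ := Matrix.of fun b s => if b && s then -1 else 1

lemma det_Kmat : Kmat.det = -2 := by
  rw [← Matrix.det_submatrix_equiv_self finTwoEquiv Kmat, Matrix.det_fin_two]
  simp [Kmat, finTwoEquiv]

/-- The deformed matrix `A + c Â`. -/
def Bm (c : ℕ) (n : ℕ) : Matrix (SignedSetWord n) (SignedSetWord n) ℤ :=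
  weightMatrix n + (c : ℤ) • weightMatrixHat n

lemma hat_eq {n : ℕ} (v w : SignedSetWord n) :
    weightMatrixHat n v w = if starRun v ≤ starRun w then weightMatrix n v w else 0 := by
  rw [weightMatrixHat]
  by_cases h : starRun w < starRun v
  · simp [Matrix.of_apply, h, not_le.mpr h]
  · simp [Matrix.of_apply, h, not_lt.mp h]

/-- Shorthand for the leading sign of a column word. -/
def fsgn {n : ℕ} (w : SignedSetWord n) : Bool := firstSign (List.ofFn w.1)

section Blocks

variable (n c : ℕ)

/-- Top-left block. -/
noncomputable def Pblk : Matrix (Bool × SignedSetWord n) (Bool × SignedSetWord n) ℤ :=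
  ((c : ℤ) + 1) • (Kmat ⊗ₖ weightMatrix n)

/-- Top-right block. -/
noncomputable def Qblk : Matrix (Bool × SignedSetWord n) (SignedSetWord n) ℤ :=
  Matrix.of fun p w =>
    ((c : ℤ) + 1) * ((if p.1 && fsgn w then -1 else 1) * weightMatrix n p.2 w)

/-- Bottom-left block. -/
noncomputable def Rblk : Matrix (SignedSetWord n) (Bool × SignedSetWord n) ℤ :=
  Matrix.of fun v p => if fsgn p.2 = p.1 then -weightMatrix n v p.2 else 0

/-- Elimination block. -/
noncomputable def Xblk : Matrix (Bool × SignedSetWord n) (SignedSetWord n) ℤ :=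
  Matrix.of fun p w => if p = (fsgn w, w) then (-1 : ℤ) else 0

lemma Bm_submatrix :
    (Bm c (n + 1)).submatrix (splitEquiv n) (splitEquiv n) =
      Matrix.fromBlocks (Pblk n c) (Qblk n c) (Rblk n) (((c : ℤ) + 1) • weightMatrixHat n) := by
  ext i j
  rcases i with ⟨b, v⟩ | v <;> rcases j with ⟨s, w⟩ | w <;>
    simp only [Matrix.submatrix_apply, splitEquiv_inl, splitEquiv_inr, Bm, Matrix.add_apply,
      Matrix.smul_apply, Matrix.fromBlocks_apply₁₁, Matrix.fromBlocks_apply₁₂,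
      Matrix.fromBlocks_apply₂₁, Matrix.fromBlocks_apply₂₂, smul_eq_mul]
  · have h0 : starRun (consW (some b) v) ≤ starRun (consW (some s) w) := by
      rw [starRun_consW_some]; omega
    rw [hat_eq, if_pos h0, wm_some]
    simp only [Pblk, Matrix.smul_apply, Matrix.kroneckerMap_apply, Kmat, Matrix.of_apply,
      ofFn_consW, firstSign_some, smul_eq_mul]
    ring
  · have h0 : starRun (consW (some b) v) ≤ starRun (consW none w) := by
      rw [starRun_consW_some]; omega
    rw [hat_eq, if_pos h0, wm_some]
    simp only [Qblk, Matrix.of_apply, ofFn_consW, firstSign_none, fsgn]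
    ring
  · have h0 : ¬ starRun (consW none v) ≤ starRun (consW (some s) w) := by
      rw [starRun_consW_some, starRun_consW_none]; omega
    rw [hat_eq, if_neg h0, wm_none_some]
    simp only [Rblk, Matrix.of_apply, fsgn]
    ring
  · have h0 : (starRun (consW none v) ≤ starRun (consW none w)) ↔ (starRun v ≤ starRun w) := by
      rw [starRun_consW_none, starRun_consW_none]; omega
    rw [hat_eq, wm_none_none, if_congr h0 rfl rfl, hat_eq]
    by_cases h : starRun v ≤ starRun w
    · simp only [if_pos h]; ring
    · simp only [if_neg h]; ring

end Blocks

lemma det_Bm_succ (n c : ℕ) :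
    (Bm c (n + 1)).det
      = ((c : ℤ) + 1) ^ (2 * Fintype.card (SignedSetWord n))
        * (-2) ^ (Fintype.card (SignedSetWord n))
        * (weightMatrix n).det ^ 2 * (Bm (c + 1) n).det := by
  have hPX : Pblk n c * Xblk n + Qblk n c = 0 := by
    ext ⟨b, v⟩ w
    simp only [Matrix.add_apply, Matrix.mul_apply, Matrix.zero_apply, Xblk, Pblk, Qblk,
      Matrix.of_apply, Matrix.smul_apply, Matrix.kroneckerMap_apply, Kmat, smul_eq_mul,
      mul_ite, mul_neg_one, mul_zero, Finset.sum_ite_eq', Finset.mem_univ, if_true]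
    ring
  have hRX : Rblk n * Xblk n + ((c : ℤ) + 1) • weightMatrixHat n = Bm (c + 1) n := by
    ext v w
    simp only [Matrix.add_apply, Matrix.mul_apply, Xblk, Rblk, Matrix.of_apply,
      Matrix.smul_apply, smul_eq_mul, mul_ite, mul_neg_one, mul_zero,
      Finset.sum_ite_eq', Finset.mem_univ, if_true, Bm]
    push_cast
    ring
  have hU : Matrix.fromBlocks (Pblk n c) (Qblk n c) (Rblk n)
        (((c : ℤ) + 1) • weightMatrixHat n) * Matrix.fromBlocks 1 (Xblk n) 0 1
      = Matrix.fromBlocks (Pblk n c) 0 (Rblk n) (Bm (c + 1) n) := by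
    rw [Matrix.fromBlocks_multiply]
    simp only [Matrix.mul_one, Matrix.mul_zero, add_zero, zero_add]
    rw [hPX, hRX]
  have hdetU : (Matrix.fromBlocks (1 : Matrix (Bool × SignedSetWord n) _ ℤ) (Xblk n) 0
      (1 : Matrix (SignedSetWord n) _ ℤ)).det = 1 := by
    rw [Matrix.det_fromBlocks_zero₂₁]
    simp
  calc (Bm c (n + 1)).det
      = ((Bm c (n + 1)).submatrix (splitEquiv n) (splitEquiv n)).det :=
        (Matrix.det_submatrix_equiv_self _ _).symm
    _ = (Matrix.fromBlocks (Pblk n c) (Qblk n c) (Rblk n)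
          (((c : ℤ) + 1) • weightMatrixHat n)).det := by rw [Bm_submatrix]
    _ = (Matrix.fromBlocks (Pblk n c) (Qblk n c) (Rblk n)
          (((c : ℤ) + 1) • weightMatrixHat n)).det * 1 := (mul_one _).symm
    _ = (Matrix.fromBlocks (Pblk n c) (Qblk n c) (Rblk n)
          (((c : ℤ) + 1) • weightMatrixHat n)).det
          * (Matrix.fromBlocks 1 (Xblk n) 0 (1 : Matrix (SignedSetWord n) _ ℤ)).det := by
          rw [hdetU]
    _ = (Matrix.fromBlocks (Pblk n c) (Qblk n c) (Rblk n)
          (((c : ℤ) + 1) • weightMatrixHat n) * Matrix.fromBlocks 1 (Xblk n) 0 1).det :=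
          (Matrix.det_mul _ _).symm
    _ = (Matrix.fromBlocks (Pblk n c) 0 (Rblk n) (Bm (c + 1) n)).det := by rw [hU]
    _ = (Pblk n c).det * (Bm (c + 1) n).det := Matrix.det_fromBlocks_zero₁₂ _ _ _
    _ = _ := by
          rw [Pblk, Matrix.det_smul, Matrix.det_kronecker, det_Kmat]
          simp only [Fintype.card_prod, Fintype.card_bool]
          ring

lemma ofFn_boolEquiv (b : Bool) : List.ofFn (boolEquiv b).1 = [some b] := by
  simp [boolEquiv]
  rfl

lemma starRun_boolEquiv (b : Bool) : starRun (boolEquiv b) = 0 := by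
  rw [starRun_eq_nr, ofFn_boolEquiv, nr_some]

lemma wm0 (b s : Bool) :
    weightMatrix 0 (boolEquiv b) (boolEquiv s) = if b && s then -1 else 1 := by
  show wt (compOfWord (List.ofFn (boolEquiv b).1)) (List.ofFn (boolEquiv s).1) = _
  rw [ofFn_boolEquiv, ofFn_boolEquiv,
    show compOfWord [some b] = [(1, b)] from rfl,
    wt_some b [] (some s) [], firstSign_some]
  simp [wt]

lemma det_Bm_zero (c : ℕ) : (Bm c 0).det = -2 * ((c : ℤ) + 1) ^ 2 := by
  rw [← Matrix.det_submatrix_equiv_self boolEquiv]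
  have hsub : (Bm c 0).submatrix boolEquiv boolEquiv = ((c : ℤ) + 1) • Kmat := by
    ext b s
    simp only [Matrix.submatrix_apply, Bm, Matrix.add_apply, Matrix.smul_apply, smul_eq_mul,
      hat_eq, starRun_boolEquiv, le_refl, if_true, wm0, Kmat, Matrix.of_apply]
    ring
  rw [hsub, Matrix.det_smul, det_Kmat]
  simp only [Fintype.card_bool]
  ring

/-- The factor `m_γ` (deformed by `c`). -/
noncomputable def rf (c : ℕ) {n : ℕ} (γ : SignedSetWord n) : ℝ :=
  Real.sqrt 2 ^ (partSizes γ).length * (((partSizes γ).headI + c : ℕ) : ℝ)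
    * (((partSizes γ).tail.prod : ℕ) : ℝ)

/-- The deformed product `∏ m_γ`. -/
noncomputable def Rp (c n : ℕ) : ℝ := ∏ γ : SignedSetWord n, rf c γ

lemma comp_pos : ∀ (l : List OB), ∀ p ∈ compOfWord l, 0 < p.1 := by
  intro l
  induction l with
  | nil => simp [compOfWord]
  | cons x t ih =>
      cases x with
      | some b =>
          intro p hp
          rcases (by simpa [compOfWord] using hp : p = (1, b) ∨ p ∈ compOfWord t) with h | h
          · simp [h]
          · exact ih p h
      | none =>
          intro p hp
          cases h : compOfWord t with
          | nil => rw [compOfWord, h] at hp; simp at hp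
          | cons q r =>
              obtain ⟨a, cb⟩ := q
              rw [compOfWord, h] at hp
              rcases (by simpa using hp : p = (a + 1, cb) ∨ p ∈ r) with h2 | h2
              · simp [h2]
              · exact ih p (h ▸ List.mem_cons_of_mem _ h2)

lemma partSizes_eq {n : ℕ} (γ : SignedSetWord n) :
    ∃ c0 t, compOfWord (List.ofFn γ.1) = (starRun γ + 1, c0) :: t ∧
      partSizes γ = (starRun γ + 1) :: t.map Prod.fst := by
  obtain ⟨c0, t, ht⟩ := comp_head_word γ
  exact ⟨c0, t, ht, by rw [partSizes, ht, List.map_cons]⟩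

lemma partSizes_cons_some {n : ℕ} (b : Bool) (γ : SignedSetWord n) :
    partSizes (consW (some b) γ) = 1 :: partSizes γ := by
  rw [partSizes, ofFn_consW,
    show compOfWord (some b :: List.ofFn γ.1) = (1, b) :: compOfWord (List.ofFn γ.1) from rfl,
    List.map_cons]
  rfl

lemma rf_cons_some (c : ℕ) {n : ℕ} (b : Bool) (v : SignedSetWord n) :
    rf c (consW (some b) v) = (Real.sqrt 2 * ((c : ℝ) + 1)) * rf 0 v := by
  obtain ⟨c0, t, ht, hps⟩ := partSizes_eq v
  rw [rf, rf, partSizes_cons_some, hps]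
  simp only [List.headI, List.tail_cons, List.length_cons, List.prod_cons, List.tail]
  push_cast
  ring

lemma rf_cons_none (c : ℕ) {n : ℕ} (v : SignedSetWord n) :
    rf c (consW none v) = rf (c + 1) v := by
  obtain ⟨c0, t, ht, hps⟩ := partSizes_eq v
  have hps2 : partSizes (consW none v) = (starRun v + 2) :: t.map Prod.fst := by
    rw [partSizes, ofFn_consW, compOfWord_none_cons ht, List.map_cons]
  rw [rf, rf, hps2, hps]
  simp only [List.headI, List.tail_cons, List.length_cons]
  push_cast
  ring

lemma rf_zero {n : ℕ} (γ : SignedSetWord n) :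
    rf 0 γ = Real.sqrt 2 ^ (partSizes γ).length * ((partSizes γ).prod : ℝ) := by
  obtain ⟨c0, t, ht, hps⟩ := partSizes_eq γ
  rw [rf, hps]
  simp only [List.headI, List.tail_cons, List.length_cons, List.prod_cons]
  push_cast
  ring

lemma rf_pos (c : ℕ) {n : ℕ} (γ : SignedSetWord n) : 0 < rf c γ := by
  obtain ⟨c0, t, ht, hps⟩ := partSizes_eq γ
  rw [rf]
  have h1 : (0 : ℝ) < Real.sqrt 2 ^ (partSizes γ).length :=
    pow_pos (Real.sqrt_pos.mpr (by norm_num)) _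
  have h2 : (0 : ℝ) < (((partSizes γ).headI + c : ℕ) : ℝ) := by
    have : 0 < (partSizes γ).headI := by rw [hps]; simp
    exact_mod_cast Nat.add_pos_left this c
  have h3 : (0 : ℝ) < (((partSizes γ).tail.prod : ℕ) : ℝ) := by
    have : 0 < (partSizes γ).tail.prod := by
      apply List.prod_pos
      intro x hx
      rw [hps] at hx
      simp only [List.tail_cons, List.mem_map] at hx
      obtain ⟨p, hp, rfl⟩ := hx
      exact comp_pos _ p (ht ▸ List.mem_cons_of_mem _ hp)
    exact_mod_cast this
  positivity

lemma Rp_succ (c n : ℕ) :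
    Rp c (n + 1) = ((c : ℝ) + 1) ^ (2 * Fintype.card (SignedSetWord n))
      * 2 ^ (Fintype.card (SignedSetWord n)) * (Rp 0 n) ^ 2 * Rp (c + 1) n := by
  set N := Fintype.card (SignedSetWord n) with hN
  set K := Real.sqrt 2 * ((c : ℝ) + 1) with hK
  have h1 : Rp c (n + 1) = ∏ x : (Bool × SignedSetWord n) ⊕ SignedSetWord n,
      rf c (splitEquiv n x) :=
    (Fintype.prod_equiv (splitEquiv n) _ _ fun x => rfl).symm
  rw [h1, Fintype.prod_sum_type]
  have h2 : ∀ p : Bool × SignedSetWord n,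
      rf c (splitEquiv n (Sum.inl p)) = K * rf 0 p.2 := by
    rintro ⟨b, v⟩
    rw [splitEquiv_inl, rf_cons_some]
  have h3 : ∀ v : SignedSetWord n,
      rf c (splitEquiv n (Sum.inr v)) = rf (c + 1) v := by
    intro v
    rw [splitEquiv_inr, rf_cons_none]
  rw [Finset.prod_congr rfl fun p _ => h2 p, Finset.prod_congr rfl fun v _ => h3 v]
  have hinner : (∏ v : SignedSetWord n, K * rf 0 v) = K ^ N * Rp 0 n := by
    rw [Finset.prod_mul_distrib, Finset.prod_const, Finset.card_univ]
    rfl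
  have h4 : (∏ p : Bool × SignedSetWord n, K * rf 0 p.2) = (K ^ N * Rp 0 n) ^ 2 := by
    rw [Fintype.prod_prod_type, Finset.prod_congr rfl fun b _ => hinner,
      Finset.prod_const, Finset.card_univ, Fintype.card_bool]
  rw [h4, show (∏ v : SignedSetWord n, rf (c + 1) v) = Rp (c + 1) n from rfl]
  have hK2 : K ^ 2 = 2 * ((c : ℝ) + 1) ^ 2 := by
    rw [hK, mul_pow, Real.sq_sqrt (by norm_num : (0:ℝ) ≤ 2)]
  have e : (K ^ N * Rp 0 n) ^ 2 = 2 ^ N * ((c : ℝ) + 1) ^ (2 * N) * (Rp 0 n) ^ 2 := by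
    rw [mul_pow, ← pow_right_comm, hK2, mul_pow, ← pow_mul]
  rw [e]
  ring

lemma Bm_zero_eq (n : ℕ) : Bm 0 n = weightMatrix n := by
  simp [Bm]

lemma Rp_base (c : ℕ) : Rp c 0 = 2 * ((c : ℝ) + 1) ^ 2 := by
  have h : Rp c 0 = ∏ b : Bool, rf c (boolEquiv b) :=
    (Fintype.prod_equiv boolEquiv _ _ fun b => rfl).symm
  have hrf : ∀ b, rf c (boolEquiv b) = Real.sqrt 2 * ((c : ℝ) + 1) := by
    intro b
    have hps : partSizes (boolEquiv b) = [1] := by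
      rw [partSizes, ofFn_boolEquiv]
      rfl
    rw [rf, hps]
    push_cast
    simp
    ring
  rw [h, Finset.prod_congr rfl fun b _ => hrf b, Finset.prod_const, Finset.card_univ,
    Fintype.card_bool, mul_pow, Real.sq_sqrt (by norm_num : (0:ℝ) ≤ 2)]

lemma main_ind : ∀ (n : ℕ) (c : ℕ),
    (Bm c n).det ≠ 0 ∧ |(((Bm c n).det : ℤ) : ℝ)| = Rp c n := by
  intro n
  induction n with
  | zero =>
      intro c
      have hd := det_Bm_zero c
      constructor
      · rw [hd]
        have h1 : (0:ℤ) < ((c : ℤ) + 1) ^ 2 := by positivity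
        nlinarith
      · rw [hd, Rp_base]
        push_cast
        rw [abs_of_nonpos (by nlinarith [sq_nonneg ((c : ℝ) + 1)])]
        ring
  | succ n ih =>
      intro c
      obtain ⟨h0ne, h0abs⟩ := ih 0
      obtain ⟨h1ne, h1abs⟩ := ih (c + 1)
      have hAne : (weightMatrix n).det ≠ 0 := by rw [← Bm_zero_eq]; exact h0ne
      have hAabs : |(((weightMatrix n).det : ℤ) : ℝ)| = Rp 0 n := by
        rw [← Bm_zero_eq]; exact h0abs
      have hd := det_Bm_succ n c
      constructor
      · rw [hd]
        refine mul_ne_zero (mul_ne_zero (mul_ne_zero ?_ ?_) ?_) h1ne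
        · exact pow_ne_zero _ (by positivity : (0:ℤ) < (c : ℤ) + 1).ne'
        · exact pow_ne_zero _ (by norm_num)
        · exact pow_ne_zero _ hAne
      · rw [hd, Rp_succ]
        simp only [Int.cast_mul, Int.cast_pow, Int.cast_add, Int.cast_natCast, Int.cast_one,
          Int.cast_neg, Int.cast_ofNat]
        rw [abs_mul, abs_mul, abs_mul, abs_pow, abs_pow, abs_pow, h1abs, hAabs,
          abs_of_nonneg (by positivity : (0:ℝ) ≤ (c : ℝ) + 1),
          show |(-2 : ℝ)| = 2 by norm_num]

theorem weightMatrix_det' (n : ℕ) :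
    (weightMatrix n).det ≠ 0 ∧
    |((weightMatrix n).det : ℝ)|
      = ∏ γ : SignedSetWord n,
          (Real.sqrt 2) ^ (partSizes γ).length * ((partSizes γ).prod : ℝ) := by
  obtain ⟨hne, habs⟩ := main_ind n 0
  rw [Bm_zero_eq] at hne habs
  exact ⟨hne, habs.trans (Finset.prod_congr rfl fun γ _ => rf_zero γ)⟩

/-- The weight matrix `A_n` (here `A_{n+1} = weightMatrix n`, for all `n ≥ 1`) is
invertible; in fact `|det(A_n)| = Π_γ m_γ`, the product over all signed compositions
`γ` of `n` of `m_γ = 2^{k/2} · Π_i γ_i`, where `γ₁, ..., γ_k` are the part sizes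
of `γ`. -/
theorem weightMatrix_det (n : ℕ) :
    (weightMatrix n).det ≠ 0 ∧
    |((weightMatrix n).det : ℝ)|
      = ∏ γ : SignedSetWord n,
          (Real.sqrt 2) ^ (partSizes γ).length * ((partSizes γ).prod : ℝ) := by
  exact weightMatrix_det' n
end
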